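/- arXiv:2401.14323 — 3 statements merged into one kernel-verified Lean document; each statement's English description precedes it below -/
import Mathlib

section
/- Single-letterization of the entropy of a function of the source: Let X^n = (X₁,…,X_n) and Y^n = (Y₁,…,Y_n) be finite-valued sequences, let K = Φ(X^n) for a function Φ, let J be uniformly distributed on {1,…,n} and independent of (X^n, Y^n), and set U = (K, X₁,…,X_{J−1}, Y_{J+1},…,Y_n, J). Then H(K) ≤ n·I(U;X_J). -/
open scoped BigOperators Classical

noncomputable section

namespace CRGen

/-- A probability mass function on a finite type. -/
def IsPMF {α : Type*} [Fintype α] (p : α → ℝ) : Prop :=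
  (∀ a, 0 ≤ p a) ∧ ∑ a, p a = 1

/-- Shannon entropy to base 2 of a pmf on a finite type (`0 log 0 = 0`). -/
def entPMF {α : Type*} [Fintype α] (p : α → ℝ) : ℝ :=
  - ∑ a, p a * Real.logb 2 (p a)

/-- Distribution (pushforward pmf) of a random variable on a finite probability
space with pmf `μ`. -/
def dist {Ω α : Type*} [Fintype Ω] (μ : Ω → ℝ) (X : Ω → α) : α → ℝ :=
  fun a => ∑ ω, if X ω = a then μ ω else 0

/-- Shannon entropy (base 2) of a random variable. -/
def H {Ω α : Type*} [Fintype Ω] [Fintype α] (μ : Ω → ℝ) (X : Ω → α) : ℝ :=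
  entPMF (dist μ X)

/-- Conditional entropy `H(X|Y)`. -/
def condH {Ω α β : Type*} [Fintype Ω] [Fintype α] [Fintype β]
    (μ : Ω → ℝ) (X : Ω → α) (Y : Ω → β) : ℝ :=
  H μ (fun ω => (X ω, Y ω)) - H μ Y

/-- Mutual information `I(X;Y)`. -/
def MI {Ω α β : Type*} [Fintype Ω] [Fintype α] [Fintype β]
    (μ : Ω → ℝ) (X : Ω → α) (Y : Ω → β) : ℝ :=
  H μ X + H μ Y - H μ (fun ω => (X ω, Y ω))

/-- Conditional mutual information `I(X;Y|Z)`. -/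
def condMI {Ω α β γ : Type*} [Fintype Ω] [Fintype α] [Fintype β] [Fintype γ]
    (μ : Ω → ℝ) (X : Ω → α) (Y : Ω → β) (Z : Ω → γ) : ℝ :=
  H μ (fun ω => (X ω, Z ω)) + H μ (fun ω => (Y ω, Z ω))
    - H μ (fun ω => (X ω, (Y ω, Z ω))) - H μ Z

/-- First marginal of a joint pmf on a product. -/
def margFst {α β : Type*} [Fintype α] [Fintype β] (q : α × β → ℝ) : α → ℝ :=
  fun a => ∑ b, q (a, b)

/-- Second marginal of a joint pmf on a product. -/
def margSnd {α β : Type*} [Fintype α] [Fintype β] (q : α × β → ℝ) : β → ℝ :=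
  fun b => ∑ a, q (a, b)

/-- Mutual information of a joint pmf on a product. -/
def miPMF {α β : Type*} [Fintype α] [Fintype β] (q : α × β → ℝ) : ℝ :=
  entPMF (margFst q) + entPMF (margSnd q) - entPMF q

/-- The (variable-length) prefix `x₁,…,x_{j−1}` of a vector, encoded as a masked
vector: entries at positions `≥ j` are replaced by `none`. -/
def maskPre {𝒳 : Type} {n : ℕ} (xv : Fin n → 𝒳) (j : Fin n) : Fin n → Option 𝒳 :=
  fun i => if (i : ℕ) < (j : ℕ) then some (xv i) else none

/-- The (variable-length) suffix `y_{j+1},…,y_n` of a vector, encoded as a masked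
vector: entries at positions `≤ j` are replaced by `none`. -/
def maskSuf {𝒴 : Type} {n : ℕ} (yv : Fin n → 𝒴) (j : Fin n) : Fin n → Option 𝒴 :=
  fun i => if (j : ℕ) < (i : ℕ) then some (yv i) else none

set_option linter.unusedSectionVars false

section AuxLemmas
variable {Ω α β γ : Type*} [Fintype Ω] [Fintype α] [Fintype β] [Fintype γ]

lemma sum_mu_comp (μ : Ω → ℝ) (X : Ω → α) (g : α → ℝ) :
    ∑ a, dist μ X a * g a = ∑ ω, μ ω * g (X ω) := by
  unfold dist
  simp only [Finset.sum_mul, ite_mul, zero_mul]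
  rw [Finset.sum_comm]
  simp

lemma sum_dist (μ : Ω → ℝ) (X : Ω → α) : ∑ a, dist μ X a = ∑ ω, μ ω := by
  have := sum_mu_comp μ X (fun _ => 1)
  simpa using this

lemma dist_nonneg' {μ : Ω → ℝ} (hμ : ∀ ω, 0 ≤ μ ω) (X : Ω → α) (a : α) :
    0 ≤ dist μ X a := by
  apply Finset.sum_nonneg; intro ω _; split <;> simp [hμ ω]

lemma H_eq_sum_omega (μ : Ω → ℝ) (X : Ω → α) :
    H μ X = - ∑ ω, μ ω * Real.logb 2 (dist μ X (X ω)) := by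
  rw [H, entPMF, sum_mu_comp μ X (fun a => Real.logb 2 (dist μ X a))]


lemma dist_self_ge {μ : Ω → ℝ} (hμ : ∀ ω, 0 ≤ μ ω) (X : Ω → α) (ω : Ω) :
    μ ω ≤ dist μ X (X ω) := by
  unfold dist
  have : μ ω = ∑ ω', if ω' = ω then μ ω else 0 := by simp
  rw [this]
  apply Finset.sum_le_sum
  intro ω' _
  by_cases h : ω' = ω <;> simp [h] <;> split <;> simp [hμ ω']

lemma dist_self_pos {μ : Ω → ℝ} (hμ : ∀ ω, 0 ≤ μ ω) (X : Ω → α) {ω : Ω}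
    (h : 0 < μ ω) : 0 < dist μ X (X ω) :=
  lt_of_lt_of_le h (dist_self_ge hμ X ω)

lemma dist_le_comp {μ : Ω → ℝ} (hμ : ∀ ω, 0 ≤ μ ω) (X : Ω → α) (f : α → β) (a : α) :
    dist μ X a ≤ dist μ (fun ω => f (X ω)) (f a) := by
  unfold dist
  apply Finset.sum_le_sum
  intro ω _
  by_cases h : X ω = a
  · simp [h]
  · simp [h]; split <;> simp [hμ ω]

lemma sum_marg (μ : Ω → ℝ) (X : Ω → α) (Z : Ω → γ) (z : γ) :
    ∑ x, dist μ (fun ω => (X ω, Z ω)) (x, z) = dist μ Z z := by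
  unfold dist
  rw [Finset.sum_comm]
  apply Finset.sum_congr rfl
  intro ω _
  by_cases h : Z ω = z <;> simp [Prod.ext_iff, h]

lemma dist_congr_self {μ : Ω → ℝ} {X : Ω → α} {W : Ω → β}
    (h : ∀ ω ω', X ω' = X ω ↔ W ω' = W ω) (ω : Ω) :
    dist μ X (X ω) = dist μ W (W ω) := by
  unfold dist
  apply Finset.sum_congr rfl
  intro ω' _
  by_cases hx : X ω' = X ω
  · rw [if_pos hx, if_pos ((h ω ω').mp hx)]
  · rw [if_neg hx, if_neg (fun hw => hx ((h ω ω').mpr hw))]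

lemma H_congr {μ : Ω → ℝ} {X : Ω → α} {W : Ω → β}
    (h : ∀ ω ω', X ω' = X ω ↔ W ω' = W ω) : H μ X = H μ W := by
  rw [H_eq_sum_omega, H_eq_sum_omega]
  congr 1
  apply Finset.sum_congr rfl
  intro ω _
  rw [dist_congr_self h ω]

lemma H_const {μ : Ω → ℝ} (hμ : IsPMF μ) (c : β) : H μ (fun _ => c) = 0 := by
  have hd : dist μ (fun _ => c) = fun b => if c = b then 1 else 0 := by
    funext b
    unfold dist
    by_cases h : c = b <;> simp [h, hμ.2]
  rw [H, hd, entPMF]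
  rw [Finset.sum_eq_single c] <;> intros <;> simp_all

lemma condMI_nonneg {μ : Ω → ℝ} (hμ : IsPMF μ) (X : Ω → α) (Y : Ω → β) (Z : Ω → γ) :
    0 ≤ condMI μ X Y Z := by
  have hμ0 := hμ.1
  set dXZ := dist μ (fun ω => (X ω, Z ω)) with hdXZ
  set dYZ := dist μ (fun ω => (Y ω, Z ω)) with hdYZ
  set dXYZ := dist μ (fun ω => (X ω, (Y ω, Z ω))) with hdXYZ
  set dZ := dist μ Z with hdZ
  have hlog2 : (0:ℝ) < Real.log 2 := Real.log_pos (by norm_num)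
  -- the Gibbs ratio function
  set g : α × (β × γ) → ℝ :=
    fun w => dXZ (w.1, w.2.2) * dYZ (w.2.1, w.2.2) / (dXYZ w * dZ w.2.2) with hg
  -- step 1: condMI = - ∑ ω μω (logb dXZ + logb dYZ - logb dXYZ - logb dZ)
  have hrepr : condMI μ X Y Z =
      - ∑ ω, μ ω * (Real.logb 2 (dXZ (X ω, Z ω)) + Real.logb 2 (dYZ (Y ω, Z ω))
        - Real.logb 2 (dXYZ (X ω, (Y ω, Z ω))) - Real.logb 2 (dZ (Z ω))) := by
    rw [condMI, H_eq_sum_omega, H_eq_sum_omega, H_eq_sum_omega, H_eq_sum_omega]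
    rw [← hdXZ, ← hdYZ, ← hdXYZ, ← hdZ]
    have e : ∑ ω, μ ω * (Real.logb 2 (dXZ (X ω, Z ω)) + Real.logb 2 (dYZ (Y ω, Z ω))
        - Real.logb 2 (dXYZ (X ω, (Y ω, Z ω))) - Real.logb 2 (dZ (Z ω)))
        = (∑ ω, μ ω * Real.logb 2 (dXZ (X ω, Z ω)))
          + (∑ ω, μ ω * Real.logb 2 (dYZ (Y ω, Z ω)))
          - (∑ ω, μ ω * Real.logb 2 (dXYZ (X ω, (Y ω, Z ω))))
          - (∑ ω, μ ω * Real.logb 2 (dZ (Z ω))) := by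
      rw [← Finset.sum_add_distrib, ← Finset.sum_sub_distrib, ← Finset.sum_sub_distrib]
      apply Finset.sum_congr rfl
      intro ω _
      ring
    rw [e]
    ring
  -- termwise bound
  have hterm : ∀ ω, μ ω * (Real.logb 2 (dXZ (X ω, Z ω)) + Real.logb 2 (dYZ (Y ω, Z ω))
        - Real.logb 2 (dXYZ (X ω, (Y ω, Z ω))) - Real.logb 2 (dZ (Z ω)))
      ≤ μ ω * ((g (X ω, (Y ω, Z ω)) - 1) / Real.log 2) := by
    intro ω
    rcases eq_or_lt_of_le (hμ0 ω) with h0 | h0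
    · simp [← h0]
    have h1 : 0 < dXZ (X ω, Z ω) := dist_self_pos hμ0 (fun ω => (X ω, Z ω)) h0
    have h2 : 0 < dYZ (Y ω, Z ω) := dist_self_pos hμ0 (fun ω => (Y ω, Z ω)) h0
    have h3 : 0 < dXYZ (X ω, (Y ω, Z ω)) := dist_self_pos hμ0 (fun ω => (X ω, (Y ω, Z ω))) h0
    have h4 : 0 < dZ (Z ω) := dist_self_pos hμ0 Z h0
    have hgpos : 0 < g (X ω, (Y ω, Z ω)) := by
      rw [hg]; positivity
    have hcomb : Real.logb 2 (dXZ (X ω, Z ω)) + Real.logb 2 (dYZ (Y ω, Z ω))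
        - Real.logb 2 (dXYZ (X ω, (Y ω, Z ω))) - Real.logb 2 (dZ (Z ω))
        = Real.logb 2 (g (X ω, (Y ω, Z ω))) := by
      rw [hg]
      rw [Real.logb_div (by positivity) (by positivity),
          Real.logb_mul (ne_of_gt h1) (ne_of_gt h2),
          Real.logb_mul (ne_of_gt h3) (ne_of_gt h4)]
      ring
    rw [hcomb]
    apply mul_le_mul_of_nonneg_left _ (le_of_lt h0)
    rw [Real.logb, div_le_div_iff_of_pos_right hlog2]
    exact Real.log_le_sub_one_of_pos hgpos
  -- sum bound
  have hsum : ∑ ω, μ ω * ((g (X ω, (Y ω, Z ω)) - 1) / Real.log 2) ≤ 0 := by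
    have hconv : ∑ ω, μ ω * g (X ω, (Y ω, Z ω)) = ∑ w, dXYZ w * g w :=
      (sum_mu_comp μ (fun ω => (X ω, (Y ω, Z ω))) g).symm
    have hbound : ∑ w, dXYZ w * g w ≤ 1 := by
      have step1 : ∀ w : α × (β × γ), dXYZ w * g w ≤
          (if 0 < dZ w.2.2 then dXZ (w.1, w.2.2) * dYZ (w.2.1, w.2.2) / dZ w.2.2 else 0) := by
        intro w
        have hnn : (0:ℝ) ≤ dXYZ w := by rw [hdXYZ]; exact dist_nonneg' hμ0 _ w
        have h1 : (0:ℝ) ≤ dXZ (w.1, w.2.2) := by rw [hdXZ]; exact dist_nonneg' hμ0 _ _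
        have h2 : (0:ℝ) ≤ dYZ (w.2.1, w.2.2) := by rw [hdYZ]; exact dist_nonneg' hμ0 _ _
        rcases eq_or_lt_of_le hnn with h0 | h0
        · rw [← h0, zero_mul]
          split
          · positivity
          · exact le_refl 0
        · have hzw : dXYZ w ≤ dZ w.2.2 := by
            rw [hdXYZ, hdZ]
            simpa using dist_le_comp hμ0 (fun ω => (X ω, (Y ω, Z ω))) (fun v => v.2.2) w
          have hz : 0 < dZ w.2.2 := lt_of_lt_of_le h0 hzw
          rw [if_pos hz, hg]
          have hne : dXYZ w ≠ 0 := ne_of_gt h0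
          have hzne : dZ w.2.2 ≠ 0 := ne_of_gt hz
          apply le_of_eq
          field_simp
      have mid : ∑ w : α × (β × γ),
          (if 0 < dZ w.2.2 then dXZ (w.1, w.2.2) * dYZ (w.2.1, w.2.2) / dZ w.2.2 else 0)
          = ∑ z, (if 0 < dZ z then dZ z else 0) := by
        simp only [Fintype.sum_prod_type]
        calc ∑ x : α, ∑ y : β, ∑ z : γ,
              (if 0 < dZ z then dXZ (x, z) * dYZ (y, z) / dZ z else 0)
            = ∑ x : α, ∑ z : γ, ∑ y : β,
              (if 0 < dZ z then dXZ (x, z) * dYZ (y, z) / dZ z else 0) :=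
              Finset.sum_congr rfl (fun x _ => Finset.sum_comm)
          _ = ∑ z : γ, ∑ x : α, ∑ y : β,
              (if 0 < dZ z then dXZ (x, z) * dYZ (y, z) / dZ z else 0) := Finset.sum_comm
          _ = ∑ z, (if 0 < dZ z then dZ z else 0) := by
              apply Finset.sum_congr rfl
              intro z _
              by_cases hz : 0 < dZ z
              · simp only [if_pos hz]
                have hx : ∑ x, dXZ (x, z) = dZ z := by rw [hdXZ, hdZ]; exact sum_marg μ X Z z
                have hy : ∑ y, dYZ (y, z) = dZ z := by rw [hdYZ, hdZ]; exact sum_marg μ Y Z z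
                have key : ∑ x, ∑ y, dXZ (x, z) * dYZ (y, z) / dZ z
                    = (∑ x, dXZ (x, z)) * (∑ y, dYZ (y, z)) / dZ z := by
                  rw [Finset.sum_mul_sum, Finset.sum_div]
                  apply Finset.sum_congr rfl
                  intro x _
                  rw [Finset.sum_div]
                rw [key, hx, hy]
                field_simp
              · simp only [if_neg hz]
                simp
      calc ∑ w, dXYZ w * g w
          ≤ ∑ w : α × (β × γ),
            (if 0 < dZ w.2.2 then dXZ (w.1, w.2.2) * dYZ (w.2.1, w.2.2) / dZ w.2.2 else 0) :=
            Finset.sum_le_sum (fun w _ => step1 w)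
        _ = ∑ z, (if 0 < dZ z then dZ z else 0) := mid
        _ ≤ ∑ z, dZ z := by
            apply Finset.sum_le_sum
            intro z _
            split
            · exact le_refl _
            · rw [hdZ]; exact dist_nonneg' hμ0 _ _
        _ = 1 := by rw [hdZ, sum_dist, hμ.2]
    have e : ∑ ω, μ ω * ((g (X ω, (Y ω, Z ω)) - 1) / Real.log 2)
        = ((∑ ω, μ ω * g (X ω, (Y ω, Z ω))) - ∑ ω, μ ω) / Real.log 2 := by
      rw [eq_div_iff (ne_of_gt hlog2), Finset.sum_mul, ← Finset.sum_sub_distrib]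
      apply Finset.sum_congr rfl
      intros
      field_simp
    rw [e, hμ.2, hconv]
    apply div_nonpos_of_nonpos_of_nonneg (by linarith) (le_of_lt hlog2)
  rw [hrepr]
  have hsl := Finset.sum_le_sum (fun ω _ => hterm ω) (s := (Finset.univ : Finset Ω))
  linarith

lemma IsPMF_dist {μ : Ω → ℝ} (hμ : IsPMF μ) (X : Ω → α) : IsPMF (dist μ X) :=
  ⟨dist_nonneg' hμ.1 X, by rw [sum_dist, hμ.2]⟩

lemma MI_nonneg {μ : Ω → ℝ} (hμ : IsPMF μ) (X : Ω → α) (Y : Ω → β) :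
    0 ≤ MI μ X Y := by
  have h := condMI_nonneg hμ X Y (fun _ => (0 : Fin 1))
  rw [condMI] at h
  rw [H_const hμ] at h
  have e1 : H μ (fun ω => (X ω, (0 : Fin 1))) = H μ X :=
    (H_congr (by intro ω ω'; simp [Prod.ext_iff])).symm
  have e2 : H μ (fun ω => (Y ω, (0 : Fin 1))) = H μ Y :=
    (H_congr (by intro ω ω'; simp [Prod.ext_iff])).symm
  have e3 : H μ (fun ω => (X ω, (Y ω, (0 : Fin 1)))) = H μ (fun ω => (X ω, Y ω)) :=
    (H_congr (by intro ω ω'; simp [Prod.ext_iff])).symm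
  rw [e1, e2, e3] at h
  rw [MI]
  linarith

lemma dist_comp (μ : Ω → ℝ) (T : Ω → α) (f : α → β) (b : β) :
    dist μ (fun ω => f (T ω)) b = dist (dist μ T) f b := by
  unfold dist
  have e : ∀ t, (if f t = b then ∑ ω, (if T ω = t then μ ω else 0) else 0)
      = ∑ ω, (if T ω = t then (if f t = b then μ ω else 0) else 0) := by
    intro t
    split
    · rfl
    · simp
  simp only [e]
  rw [Finset.sum_comm]
  apply Finset.sum_congr rfl
  intro ω _
  have : ∀ t, (if T ω = t then (if f t = b then μ ω else 0) else 0)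
      = (if t = T ω then (if f t = b then μ ω else 0) else 0) := by
    intro t
    by_cases h : T ω = t
    · simp [h]
    · rw [if_neg h, if_neg (fun ht => h ht.symm)]
  simp only [this]
  rw [Finset.sum_ite_eq' Finset.univ (T ω) (fun t => if f t = b then μ ω else 0)]
  simp

lemma H_comp (μ : Ω → ℝ) (T : Ω → α) (f : α → β) :
    H μ (fun ω => f (T ω)) = H (dist μ T) f := by
  unfold H
  congr 1
  funext b
  exact dist_comp μ T f b

lemma H_mix {Ωp γ : Type*} [Fintype Ωp] [Fintype γ] {n : ℕ} (hn : 0 < n)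
    {p : Ωp → ℝ} (hp : IsPMF p) (f : Fin n → Ωp → γ) :
    H (fun jt : Fin n × Ωp => (1 / (n:ℝ)) * p jt.2) (fun jt => (f jt.1 jt.2, jt.1))
      = Real.logb 2 n + (1 / (n:ℝ)) * ∑ j, H p (f j) := by
  have hnR : (0:ℝ) < (n:ℝ) := by exact_mod_cast hn
  set c : ℝ := 1 / (n:ℝ) with hcdef
  have hc : 0 < c := by positivity
  have hd : ∀ (a : γ) (j : Fin n),
      dist (fun jt : Fin n × Ωp => c * p jt.2) (fun jt => (f jt.1 jt.2, jt.1)) (a, j)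
        = c * dist p (f j) a := by
    intro a j
    unfold dist
    rw [Fintype.sum_prod_type]
    rw [Finset.sum_eq_single j]
    · rw [Finset.mul_sum]
      apply Finset.sum_congr rfl
      intro t _
      by_cases h : f j t = a
      · simp [h]
      · simp [h, Prod.ext_iff]
    · intro j' _ hj'
      apply Finset.sum_eq_zero
      intro t _
      simp [Prod.ext_iff, hj']
    · simp
  rw [H, entPMF]
  rw [Fintype.sum_prod_type]
  simp only [hd]
  have key : ∀ j (a : γ), (c * dist p (f j) a) * Real.logb 2 (c * dist p (f j) a)
      = c * dist p (f j) a * Real.logb 2 c + c * (dist p (f j) a * Real.logb 2 (dist p (f j) a)) := by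
    intro j a
    rcases eq_or_lt_of_le (dist_nonneg' hp.1 (f j) a) with h | h
    · simp [← h]
    · rw [Real.logb_mul (ne_of_gt hc) (ne_of_gt h)]
      ring
  calc - ∑ a : γ, ∑ j : Fin n, (c * dist p (f j) a) * Real.logb 2 (c * dist p (f j) a)
      = - ∑ a : γ, ∑ j : Fin n, (c * dist p (f j) a * Real.logb 2 c
          + c * (dist p (f j) a * Real.logb 2 (dist p (f j) a))) := by
        congr 1
        apply Finset.sum_congr rfl
        intro a _
        apply Finset.sum_congr rfl
        intro j _
        exact key j a
    _ = - (∑ j : Fin n, ∑ a : γ, (c * dist p (f j) a * Real.logb 2 c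
          + c * (dist p (f j) a * Real.logb 2 (dist p (f j) a)))) := by rw [Finset.sum_comm]
    _ = - ∑ j : Fin n, (c * Real.logb 2 c
          + c * (∑ a : γ, dist p (f j) a * Real.logb 2 (dist p (f j) a))) := by
        congr 1
        apply Finset.sum_congr rfl
        intro j _
        rw [Finset.sum_add_distrib, ← Finset.mul_sum]
        congr 1
        rw [← Finset.sum_mul, ← Finset.mul_sum, sum_dist, hp.2, mul_one]
    _ = - ((n:ℝ) * (c * Real.logb 2 c) + c * ∑ j, (∑ a : γ, dist p (f j) a * Real.logb 2 (dist p (f j) a))) := by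
        rw [Finset.sum_add_distrib, Finset.sum_const, Finset.card_univ, Fintype.card_fin,
          ← Finset.mul_sum, nsmul_eq_mul]
    _ = Real.logb 2 n + c * ∑ j, H p (f j) := by
        have hlogc : Real.logb 2 c = - Real.logb 2 (n:ℝ) := by
          rw [hcdef, one_div, Real.logb_inv]
        have hHe : ∀ j, H p (f j) = - ∑ a : γ, dist p (f j) a * Real.logb 2 (dist p (f j) a) := by
          intro j; rw [H, entPMF]
        rw [hlogc]
        rw [Finset.sum_congr rfl (fun j _ => by rw [← neg_neg (∑ a : γ, dist p (f j) a * Real.logb 2 (dist p (f j) a)), ← hHe j])]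
        rw [Finset.sum_neg_distrib]
        have : (n:ℝ) * (c * -Real.logb 2 (n:ℝ)) = - Real.logb 2 (n:ℝ) := by
          rw [hcdef]
          field_simp
        rw [this]
        ring

end AuxLemmas

/-- Part III : single-letter chain rule bound on the source space. -/
lemma partIII {𝒳 𝒴 𝒦 : Type} [Fintype 𝒳] [Fintype 𝒴] [Fintype 𝒦] {n : ℕ}
    (p : (Fin n → 𝒳) × (Fin n → 𝒴) → ℝ) (hp : IsPMF p) (Φ : (Fin n → 𝒳) → 𝒦) :
    H p (fun t => Φ t.1) ≤
      ∑ j : Fin n, MI p (fun t => (Φ t.1, maskPre t.1 j, maskSuf t.2 j)) (fun t => t.1 j) := by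
  classical
  set pre : ℕ → ((Fin n → 𝒳) × (Fin n → 𝒴)) → (Fin n → Option 𝒳) :=
    fun m t i => if (i:ℕ) < m then some (t.1 i) else none with hpre
  set A : ℕ → ℝ := fun m => H p (fun t => (Φ t.1, pre m t)) - H p (pre m) with hA
  have pre0 : ∀ t t', pre 0 t' = pre 0 t := by
    intro t t'; funext i; simp [hpre]
  have hA0 : A 0 = H p (fun t => Φ t.1) := by
    have h1 : H p (fun t => (Φ t.1, pre 0 t)) = H p (fun t => Φ t.1) :=
      H_congr (by intro t t'; simp [Prod.ext_iff, pre0 t t'])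
    have h2 : H p (pre 0) = 0 := by
      rw [H_congr (X := pre 0) (W := fun _ => (0 : Fin 1))
        (by intro t t'; simp [pre0 t t'])]
      exact H_const hp _
    simp only [hA]
    rw [h1, h2]; ring
  have hAn : A n = 0 := by
    have hdet : ∀ t t' : (Fin n → 𝒳) × (Fin n → 𝒴), pre n t' = pre n t → t'.1 = t.1 := by
      intro t t' h; funext i
      have hi := congrFun h i
      simp [hpre, i.isLt] at hi
      exact hi
    have h1 : H p (fun t => (Φ t.1, pre n t)) = H p (pre n) :=
      H_congr (by
        intro t t'
        simp only [Prod.ext_iff]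
        constructor
        · exact fun h => h.2
        · intro h; exact ⟨by rw [hdet t t' h], h⟩)
    simp only [hA]
    rw [h1]; ring
  -- key step per coordinate
  have hstep : ∀ m (hm : m < n),
      A m - A (m+1) ≤ MI p (fun t => (Φ t.1, maskPre t.1 ⟨m,hm⟩, maskSuf t.2 ⟨m,hm⟩))
        (fun t => t.1 ⟨m,hm⟩) := by
    intro m hm
    set jm : Fin n := ⟨m, hm⟩ with hjm
    have hmask : ∀ t : (Fin n → 𝒳) × (Fin n → 𝒴), maskPre t.1 jm = pre m t := by
      intro t; funext i; simp [maskPre, hpre, hjm]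
    have key : ∀ t t' : (Fin n → 𝒳) × (Fin n → 𝒴),
        pre (m+1) t' = pre (m+1) t ↔ (t'.1 jm = t.1 jm ∧ pre m t' = pre m t) := by
      intro t t'
      constructor
      · intro h
        constructor
        · have h2 := congrFun h jm
          simp [hpre, hjm, Nat.lt_succ_self] at h2
          exact h2
        · funext i
          have hi := congrFun h i
          by_cases hlt : (i:ℕ) < m
          · have hlt' : (i:ℕ) < m+1 := Nat.lt_succ_of_lt hlt
            simp [hpre, hlt, hlt'] at hi ⊢
            exact hi
          · simp [hpre, hlt]
      · rintro ⟨h1, h2⟩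
        funext i
        by_cases hlt : (i:ℕ) < m
        · have h3 := congrFun h2 i
          simp [hpre, hlt] at h3
          simp [hpre, Nat.lt_succ_of_lt hlt, h3]
        · by_cases heq : (i:ℕ) = m
          · have hie : i = jm := Fin.ext (by simp [hjm, heq])
            simp [hpre, hie, hjm, Nat.lt_succ_self, h1]
            exact h1
          · have hnlt : ¬ (i:ℕ) < m+1 := by omega
            simp [hpre, hnlt]
    have e1 : H p (pre (m+1)) = H p (fun t => (t.1 jm, pre m t)) :=
      H_congr (by intro t t'; rw [key t t']; simp [Prod.ext_iff])
    have e2 : H p (fun t => (Φ t.1, pre (m+1) t))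
        = H p (fun t => (Φ t.1, (t.1 jm, pre m t))) :=
      H_congr (by intro t t'; simp only [Prod.ext_iff]; rw [key t t']; try tauto)
    have hAdiff : A m - A (m+1) = condMI p (fun t => Φ t.1) (fun t => t.1 jm) (pre m) := by
      simp only [hA, condMI]
      rw [e1, e2]; ring
    -- condMI ≤ MI (K,pre) z
    have f1 : H p (fun t => (t.1 jm, pre m t)) = H p (fun t => (pre m t, t.1 jm)) :=
      H_congr (by intro t t'; simp [Prod.ext_iff]; try tauto)
    have f2 : H p (fun t => (Φ t.1, (t.1 jm, pre m t)))
        = H p (fun t => ((Φ t.1, pre m t), t.1 jm)) :=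
      H_congr (by intro t t'; simp [Prod.ext_iff]; try tauto)
    have b1 : condMI p (fun t => Φ t.1) (fun t => t.1 jm) (pre m)
        = MI p (fun t => (Φ t.1, pre m t)) (fun t => t.1 jm)
          - MI p (pre m) (fun t => t.1 jm) := by
      simp only [condMI, MI]
      rw [f1, f2]; ring
    have b1' : condMI p (fun t => Φ t.1) (fun t => t.1 jm) (pre m)
        ≤ MI p (fun t => (Φ t.1, pre m t)) (fun t => t.1 jm) := by
      have := MI_nonneg hp (pre m) (fun t => t.1 jm)
      linarith
    -- MI (K,pre) z ≤ MI v z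
    have g1 : H p (fun t => (maskSuf t.2 jm, (Φ t.1, pre m t)))
        = H p (fun t => (Φ t.1, maskPre t.1 jm, maskSuf t.2 jm)) :=
      H_congr (by intro t t'; simp [Prod.ext_iff, hmask]; try tauto)
    have g2 : H p (fun t => (t.1 jm, (Φ t.1, pre m t)))
        = H p (fun t => ((Φ t.1, pre m t), t.1 jm)) :=
      H_congr (by intro t t'; simp [Prod.ext_iff]; try tauto)
    have g3 : H p (fun t => (maskSuf t.2 jm, (t.1 jm, (Φ t.1, pre m t))))
        = H p (fun t => ((Φ t.1, maskPre t.1 jm, maskSuf t.2 jm), t.1 jm)) :=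
      H_congr (by intro t t'; simp [Prod.ext_iff, hmask]; try tauto)
    have b2 : MI p (fun t => (Φ t.1, maskPre t.1 jm, maskSuf t.2 jm)) (fun t => t.1 jm)
        = MI p (fun t => (Φ t.1, pre m t)) (fun t => t.1 jm)
          + condMI p (fun t => maskSuf t.2 jm) (fun t => t.1 jm)
              (fun t => (Φ t.1, pre m t)) := by
      simp only [condMI, MI]
      rw [g1, g2, g3]; ring
    have b2' : MI p (fun t => (Φ t.1, pre m t)) (fun t => t.1 jm)
        ≤ MI p (fun t => (Φ t.1, maskPre t.1 jm, maskSuf t.2 jm)) (fun t => t.1 jm) := by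
      have := condMI_nonneg hp (fun t => maskSuf t.2 jm) (fun t => t.1 jm)
        (fun t => (Φ t.1, pre m t))
      linarith
    rw [hAdiff]
    exact le_trans b1' b2'
  -- telescoping
  have tele : A 0 - A n = ∑ m ∈ Finset.range n, (A m - A (m+1)) :=
    (Finset.sum_range_sub' A n).symm
  have hle : ∑ m ∈ Finset.range n, (A m - A (m+1))
      ≤ ∑ m ∈ Finset.range n, (if h : m < n then
          MI p (fun t => (Φ t.1, maskPre t.1 ⟨m,h⟩, maskSuf t.2 ⟨m,h⟩)) (fun t => t.1 ⟨m,h⟩)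
        else 0) := by
    apply Finset.sum_le_sum
    intro m hm
    have hmn := Finset.mem_range.mp hm
    rw [dif_pos hmn]
    exact hstep m hmn
  have hconv : ∑ m ∈ Finset.range n, (if h : m < n then
          MI p (fun t => (Φ t.1, maskPre t.1 ⟨m,h⟩, maskSuf t.2 ⟨m,h⟩)) (fun t => t.1 ⟨m,h⟩)
        else 0)
      = ∑ j : Fin n, MI p (fun t => (Φ t.1, maskPre t.1 j, maskSuf t.2 j)) (fun t => t.1 j) := by
    rw [← Fin.sum_univ_eq_sum_range]
    apply Finset.sum_congr rfl
    intro j _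
    rw [dif_pos j.isLt]
  calc H p (fun t => Φ t.1) = A 0 - A n := by rw [hA0, hAn]; ring
    _ ≤ _ := by rw [tele] at *; rw [← hconv]; exact hle

/-- Part II : conditioning on the uniform index. -/
lemma partII {𝒳 𝒴 𝒦 : Type} [Fintype 𝒳] [Fintype 𝒴] [Fintype 𝒦] {n : ℕ} (hn : 0 < n)
    (p : (Fin n → 𝒳) × (Fin n → 𝒴) → ℝ) (hp : IsPMF p) (Φ : (Fin n → 𝒳) → 𝒦) :
    ∑ j : Fin n, MI p (fun t => (Φ t.1, maskPre t.1 j, maskSuf t.2 j)) (fun t => t.1 j)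
      ≤ (n:ℝ) * MI (fun jt : Fin n × ((Fin n → 𝒳) × (Fin n → 𝒴)) => (1/(n:ℝ)) * p jt.2)
          (fun jt => (Φ jt.2.1, maskPre jt.2.1 jt.1, maskSuf jt.2.2 jt.1, jt.1))
          (fun jt => jt.2.1 jt.1) := by
  classical
  have hnR : (0:ℝ) < (n:ℝ) := by exact_mod_cast hn
  set q : Fin n × ((Fin n → 𝒳) × (Fin n → 𝒴)) → ℝ :=
    fun jt => (1/(n:ℝ)) * p jt.2 with hqdef
  set v : Fin n → ((Fin n → 𝒳) × (Fin n → 𝒴)) →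
      (𝒦 × (Fin n → Option 𝒳) × (Fin n → Option 𝒴)) :=
    fun j t => (Φ t.1, maskPre t.1 j, maskSuf t.2 j) with hvdef
  set z : Fin n → ((Fin n → 𝒳) × (Fin n → 𝒴)) → 𝒳 := fun j t => t.1 j with hzdef
  set W' : Fin n × ((Fin n → 𝒳) × (Fin n → 𝒴)) →
      (𝒦 × (Fin n → Option 𝒳) × (Fin n → Option 𝒴) × Fin n) :=
    fun jt => (Φ jt.2.1, maskPre jt.2.1 jt.1, maskSuf jt.2.2 jt.1, jt.1) with hWdef
  set Z' : Fin n × ((Fin n → 𝒳) × (Fin n → 𝒴)) → 𝒳 := fun jt => jt.2.1 jt.1 with hZdef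
  set Jv : Fin n × ((Fin n → 𝒳) × (Fin n → 𝒴)) → Fin n := fun jt => jt.1 with hJdef
  have hq : IsPMF q := by
    constructor
    · intro jt
      have := hp.1 jt.2
      rw [hqdef]
      positivity
    · have e0 : ∑ a, q a = ∑ jt : Fin n × ((Fin n → 𝒳) × (Fin n → 𝒴)), (1/(n:ℝ)) * p jt.2 := rfl
      rw [e0, Fintype.sum_prod_type]
      have inner : ∀ j : Fin n,
          (∑ t, (1/(n:ℝ)) * p ((j, t) : Fin n × ((Fin n → 𝒳) × (Fin n → 𝒴))).2) = 1/(n:ℝ) := by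
        intro j
        have e1 : (∑ t, (1/(n:ℝ)) * p ((j, t) : Fin n × ((Fin n → 𝒳) × (Fin n → 𝒴))).2)
            = ∑ t, (1/(n:ℝ)) * p t := rfl
        rw [e1, ← Finset.mul_sum, hp.2, mul_one]
      rw [Finset.sum_congr rfl (fun j _ => inner j), Finset.sum_const, Finset.card_univ,
        Fintype.card_fin, nsmul_eq_mul]
      field_simp
  -- decomposition
  have cA : H q (fun jt => (W' jt, Jv jt)) = H q W' :=
    H_congr (by intro a b; simp only [hWdef, hJdef, Prod.ext_iff]; try tauto)
  have cB : H q (fun jt => (W' jt, (Z' jt, Jv jt))) = H q (fun jt => (W' jt, Z' jt)) :=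
    H_congr (by intro a b; simp only [hWdef, hJdef, hZdef, Prod.ext_iff]; try tauto)
  have cC : H q (fun jt => (Jv jt, Z' jt)) = H q (fun jt => (Z' jt, Jv jt)) :=
    H_congr (by intro a b; simp only [hJdef, hZdef, Prod.ext_iff]; try tauto)
  have dec : MI q W' Z' = MI q Jv Z' + condMI q W' Z' Jv := by
    simp only [MI, condMI]
    linarith [cA, cB, cC]
  -- mixture computations
  have m1 : H q (fun jt => (W' jt, Jv jt))
      = Real.logb 2 n + (1/(n:ℝ)) * ∑ j, H p (v j) := by
    rw [H_congr (W := fun jt => (v jt.1 jt.2, jt.1))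
      (by intro a b; simp only [hWdef, hJdef, hvdef, Prod.ext_iff]; try tauto)]
    exact H_mix hn hp v
  have m2 : H q (fun jt => (Z' jt, Jv jt))
      = Real.logb 2 n + (1/(n:ℝ)) * ∑ j, H p (z j) := by
    rw [H_congr (W := fun jt => (z jt.1 jt.2, jt.1))
      (by intro a b; simp only [hZdef, hJdef, hzdef, Prod.ext_iff]; try tauto)]
    exact H_mix hn hp z
  have m3 : H q (fun jt => (W' jt, (Z' jt, Jv jt)))
      = Real.logb 2 n + (1/(n:ℝ)) * ∑ j, H p (fun t => (v j t, z j t)) := by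
    rw [H_congr (W := fun jt => ((v jt.1 jt.2, z jt.1 jt.2), jt.1))
      (by intro a b; simp only [hWdef, hJdef, hZdef, hvdef, hzdef, Prod.ext_iff]; try tauto)]
    exact H_mix hn hp (fun j t => (v j t, z j t))
  have m4 : H q Jv = Real.logb 2 n := by
    rw [H_congr (W := fun jt => ((0 : Fin 1), jt.1))
      (by intro a b; simp only [hJdef, Prod.ext_iff]; try tauto)]
    have := H_mix hn hp (fun (_ : Fin n) (_ : (Fin n → 𝒳) × (Fin n → 𝒴)) => (0 : Fin 1))
    rw [this]
    simp [H_const hp]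
  have hcond : condMI q W' Z' Jv = (1/(n:ℝ)) * ∑ j, MI p (v j) (z j) := by
    rw [condMI, m1, m2, m3, m4]
    have : ∑ j, MI p (v j) (z j)
        = (∑ j, H p (v j)) + (∑ j, H p (z j)) - ∑ j, H p (fun t => (v j t, z j t)) := by
      rw [← Finset.sum_add_distrib, ← Finset.sum_sub_distrib]
      apply Finset.sum_congr rfl
      intro j _
      rw [MI]
    rw [this]
    ring
  have hMIge : condMI q W' Z' Jv ≤ MI q W' Z' := by
    have := MI_nonneg hq Jv Z'
    linarith
  have : ∑ j, MI p (v j) (z j) ≤ (n:ℝ) * MI q W' Z' := by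
    have h2 : (n:ℝ) * condMI q W' Z' Jv ≤ (n:ℝ) * MI q W' Z' :=
      mul_le_mul_of_nonneg_left hMIge (le_of_lt hnR)
    rw [hcond] at h2
    have h3 : (n:ℝ) * ((1/(n:ℝ)) * ∑ j, MI p (v j) (z j)) = ∑ j, MI p (v j) (z j) := by
      field_simp
    rw [h3] at h2
    exact h2
  exact this

/-- Single-letterization of the entropy of a function of the source: with
`K = Φ(X^n)`, `J` uniform on `{1,…,n}` independent of `(X^n, Y^n)`, and
`U = (K, X^{J−1}, Y_{J+1}^n, J)`, one has `H(K) ≤ n·I(U;X_J)`. -/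
theorem entropy_single_letterization
    {Ω 𝒳 𝒴 𝒦 : Type} [Fintype Ω] [Fintype 𝒳] [Fintype 𝒴] [Fintype 𝒦]
    (μ : Ω → ℝ) (hμ : IsPMF μ) {n : ℕ}
    (X : Ω → Fin n → 𝒳) (Y : Ω → Fin n → 𝒴) (Φ : (Fin n → 𝒳) → 𝒦)
    (J : Ω → Fin n)
    (hJ : ∀ (j : Fin n) (t : (Fin n → 𝒳) × (Fin n → 𝒴)),
      dist μ (fun ω => (J ω, X ω, Y ω)) (j, t)
        = (1 / (n : ℝ)) * dist μ (fun ω => (X ω, Y ω)) t) :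
    H μ (fun ω => Φ (X ω)) ≤
      (n : ℝ) * MI μ
        (fun ω => (Φ (X ω), maskPre (X ω) (J ω), maskSuf (Y ω) (J ω), J ω))
        (fun ω => X ω (J ω)) := by
  classical
  rcases Nat.eq_zero_or_pos n with hn0 | hn
  · exfalso
    subst hn0
    haveI : IsEmpty Ω := ⟨fun ω => Fin.elim0 (J ω)⟩
    have h1 := hμ.2
    rw [Finset.univ_eq_empty, Finset.sum_empty] at h1
    norm_num at h1
  set p := dist μ (fun ω => (X ω, Y ω)) with hpdef
  have hp : IsPMF p := IsPMF_dist hμ _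
  set T : Ω → Fin n × ((Fin n → 𝒳) × (Fin n → 𝒴)) := fun ω => (J ω, (X ω, Y ω)) with hTdef
  have hT : dist μ T = fun jt : Fin n × ((Fin n → 𝒳) × (Fin n → 𝒴)) => (1/(n:ℝ)) * p jt.2 := by
    funext jt
    obtain ⟨j, t⟩ := jt
    exact hJ j t
  have tK : H μ (fun ω => Φ (X ω))
      = H (fun jt : Fin n × ((Fin n → 𝒳) × (Fin n → 𝒴)) => (1/(n:ℝ)) * p jt.2)
          (fun jt => Φ jt.2.1) := by
    have h := H_comp μ T (fun jt : Fin n × ((Fin n → 𝒳) × (Fin n → 𝒴)) => Φ jt.2.1)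
    rw [hT] at h
    exact h
  have t1 : H μ (fun ω => (Φ (X ω), maskPre (X ω) (J ω), maskSuf (Y ω) (J ω), J ω))
      = H (fun jt : Fin n × ((Fin n → 𝒳) × (Fin n → 𝒴)) => (1/(n:ℝ)) * p jt.2)
          (fun jt => (Φ jt.2.1, maskPre jt.2.1 jt.1, maskSuf jt.2.2 jt.1, jt.1)) := by
    have h := H_comp μ T (fun jt : Fin n × ((Fin n → 𝒳) × (Fin n → 𝒴)) =>
      (Φ jt.2.1, maskPre jt.2.1 jt.1, maskSuf jt.2.2 jt.1, jt.1))
    rw [hT] at h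
    exact h
  have t2 : H μ (fun ω => X ω (J ω))
      = H (fun jt : Fin n × ((Fin n → 𝒳) × (Fin n → 𝒴)) => (1/(n:ℝ)) * p jt.2)
          (fun jt => jt.2.1 jt.1) := by
    have h := H_comp μ T (fun jt : Fin n × ((Fin n → 𝒳) × (Fin n → 𝒴)) => jt.2.1 jt.1)
    rw [hT] at h
    exact h
  have t3 : H μ (fun ω => ((Φ (X ω), maskPre (X ω) (J ω), maskSuf (Y ω) (J ω), J ω), X ω (J ω)))
      = H (fun jt : Fin n × ((Fin n → 𝒳) × (Fin n → 𝒴)) => (1/(n:ℝ)) * p jt.2)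
          (fun jt => ((Φ jt.2.1, maskPre jt.2.1 jt.1, maskSuf jt.2.2 jt.1, jt.1), jt.2.1 jt.1)) := by
    have h := H_comp μ T (fun jt : Fin n × ((Fin n → 𝒳) × (Fin n → 𝒴)) =>
      ((Φ jt.2.1, maskPre jt.2.1 jt.1, maskSuf jt.2.2 jt.1, jt.1), jt.2.1 jt.1))
    rw [hT] at h
    exact h
  have tMI : MI μ (fun ω => (Φ (X ω), maskPre (X ω) (J ω), maskSuf (Y ω) (J ω), J ω))
        (fun ω => X ω (J ω))
      = MI (fun jt : Fin n × ((Fin n → 𝒳) × (Fin n → 𝒴)) => (1/(n:ℝ)) * p jt.2)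
          (fun jt => (Φ jt.2.1, maskPre jt.2.1 jt.1, maskSuf jt.2.2 jt.1, jt.1))
          (fun jt => jt.2.1 jt.1) := by
    rw [MI, MI, t1, t2, ← t3]
  have hsnd : dist (fun jt : Fin n × ((Fin n → 𝒳) × (Fin n → 𝒴)) => (1/(n:ℝ)) * p jt.2)
      Prod.snd = p := by
    funext t
    simp only [dist]
    rw [Fintype.sum_prod_type]
    have inner : ∀ j : Fin n,
        (∑ t' : (Fin n → 𝒳) × (Fin n → 𝒴),
          (if ((j, t') : Fin n × ((Fin n → 𝒳) × (Fin n → 𝒴))).2 = t then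
            (1/(n:ℝ)) * p ((j, t') : Fin n × ((Fin n → 𝒳) × (Fin n → 𝒴))).2 else 0))
          = (1/(n:ℝ)) * p t := by
      intro j
      have e : (∑ t' : (Fin n → 𝒳) × (Fin n → 𝒴),
          (if ((j, t') : Fin n × ((Fin n → 𝒳) × (Fin n → 𝒴))).2 = t then
            (1/(n:ℝ)) * p ((j, t') : Fin n × ((Fin n → 𝒳) × (Fin n → 𝒴))).2 else 0))
          = ∑ t' : (Fin n → 𝒳) × (Fin n → 𝒴), (if t' = t then (1/(n:ℝ)) * p t' else 0) := rfl
      rw [e, Finset.sum_ite_eq' Finset.univ t (fun t' => (1/(n:ℝ)) * p t')]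
      simp
    rw [Finset.sum_congr rfl (fun j _ => inner j), Finset.sum_const, Finset.card_univ,
      Fintype.card_fin, nsmul_eq_mul]
    have hnR : (0:ℝ) < (n:ℝ) := by exact_mod_cast hn
    field_simp
  have tK2 : H (fun jt : Fin n × ((Fin n → 𝒳) × (Fin n → 𝒴)) => (1/(n:ℝ)) * p jt.2)
      (fun jt => Φ jt.2.1) = H p (fun t => Φ t.1) := by
    have h := H_comp (fun jt : Fin n × ((Fin n → 𝒳) × (Fin n → 𝒴)) => (1/(n:ℝ)) * p jt.2)
      Prod.snd (fun t : (Fin n → 𝒳) × (Fin n → 𝒴) => Φ t.1)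
    rw [hsnd] at h
    exact h
  rw [tK, tMI, tK2]
  exact le_trans (partIII p hp Φ) (partII hn p hp Φ)

end CRGen
end
end

section
/- Single-letter identity for the mutual-information difference: Let (X_i, Y_i), i = 1,…,n, be i.i.d. pairs of finite-valued random variables, let K be any finite-valued random variable jointly distributed with (X^n, Y^n), let J be uniformly distributed on {1,…,n} and independent of (K, X^n, Y^n), and set U = (K, X₁,…,X_{J−1}, Y_{J+1},…,Y_n, J). Then I(K;X^n) − I(K;Y^n) = n·[ I(U;X_J) − I(U;Y_J) ]. -/
open scoped BigOperators Classical

noncomputable section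

namespace CRGen

-- auxiliary

variable {τ α β γ : Type*}

def push [Fintype τ] (p : τ → ℝ) (g : τ → α) : α → ℝ :=
  fun a => ∑ s, if g s = a then p s else 0

lemma dist_comp_s9 {Ω : Type*} [Fintype Ω] [Fintype τ] (μ : Ω → ℝ) (Z : Ω → τ) (g : τ → α) :
    dist μ (fun ω => g (Z ω)) = push (dist μ Z) g := by
  funext a
  simp only [dist, push]
  have hsw : ∀ s : τ, (if g s = a then ∑ ω, if Z ω = s then μ ω else 0 else 0)
      = ∑ ω, if Z ω = s then (if g s = a then μ ω else 0) else 0 := by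
    intro s; split_ifs <;> simp
  rw [Finset.sum_congr rfl fun s _ => hsw s, Finset.sum_comm]
  refine Finset.sum_congr rfl fun ω _ => ?_
  rw [Finset.sum_eq_single (Z ω)]
  · simp
  · intro s _ hs
    simp [Ne.symm hs]
  · simp

lemma push_push [Fintype τ] [Fintype α] (p : τ → ℝ) (f : τ → α) (g : α → β) :
    push (push p f) g = push p (fun s => g (f s)) := by
  funext b
  simp only [push]
  have : ∀ a : α, (if g a = b then ∑ s, if f s = a then p s else 0 else 0)
      = ∑ s, if f s = a then (if g a = b then p s else 0) else 0 := by
    intro a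
    split_ifs with h <;> simp
  rw [Finset.sum_congr rfl fun a _ => this a, Finset.sum_comm]
  refine Finset.sum_congr rfl fun s _ => ?_
  rw [Finset.sum_eq_single (f s)]
  · simp
  · intro a _ ha; simp [Ne.symm ha]
  · simp

lemma push_sum [Fintype τ] [Fintype α] (p : τ → ℝ) (g : τ → α) :
    ∑ a, push p g a = ∑ s, p s := by
  simp only [push]
  rw [Finset.sum_comm]
  refine Finset.sum_congr rfl fun s _ => ?_
  simp [Finset.sum_ite_eq]

lemma push_nonneg [Fintype τ] [Fintype α] {p : τ → ℝ} (hp : ∀ s, 0 ≤ p s) (g : τ → α) (a : α) :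
    0 ≤ push p g a :=
  Finset.sum_nonneg fun s _ => by split_ifs; exacts [hp s, le_rfl]

lemma entPMF_push_inj [Fintype τ] [Fintype α] (p : τ → ℝ) {g : τ → α}
    (hg : Function.Injective g) : entPMF (push p g) = entPMF p := by
  simp only [entPMF]
  congr 1
  have hval : ∀ s, push p g (g s) = p s := by
    intro s
    simp only [push]
    rw [Finset.sum_eq_single s]
    · simp
    · intro x _ hx
      rw [if_neg (fun h => hx (hg h))]
    · simp
  have h0 : ∀ a ∈ Finset.univ, a ∉ Finset.univ.image g →
      push p g a * Real.logb 2 (push p g a) = 0 := by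
    intro a _ ha
    have : push p g a = 0 := by
      apply Finset.sum_eq_zero
      intro s _
      have : g s ≠ a := fun h => ha (Finset.mem_image.2 ⟨s, Finset.mem_univ s, h⟩)
      simp [this]
    simp [this]
  rw [← Finset.sum_subset (Finset.subset_univ _) h0,
    Finset.sum_image (fun s _ t _ h => hg h)]
  exact Finset.sum_congr rfl fun s _ => by rw [hval s]

lemma ent_push_congr [Fintype τ] [Fintype α] [Fintype β] (p : τ → ℝ)
    (g₁ : τ → α) (g₂ : τ → β) (f : α → β) (h : β → α)
    (hf : ∀ t, f (g₁ t) = g₂ t) (hh : ∀ t, h (g₂ t) = g₁ t) :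
    entPMF (push p g₁) = entPMF (push p g₂) := by
  have e1 : entPMF (push p (fun t => (g₁ t, g₂ t))) = entPMF (push p g₁) := by
    have h2 : (fun t => (g₁ t, f (g₁ t))) = fun t => (g₁ t, g₂ t) := by
      funext t; rw [hf t]
    have h1 : push p (fun t => (g₁ t, g₂ t)) = push (push p g₁) (fun a => (a, f a)) := by
      rw [push_push, h2]
    rw [h1]
    exact entPMF_push_inj _ fun a b hab => congrArg Prod.fst hab
  have e2 : entPMF (push p (fun t => (g₁ t, g₂ t))) = entPMF (push p g₂) := by
    have h2 : (fun t => (h (g₂ t), g₂ t)) = fun t => (g₁ t, g₂ t) := by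
      funext t; rw [hh t]
    have h1 : push p (fun t => (g₁ t, g₂ t)) = push (push p g₂) (fun b => (h b, b)) := by
      rw [push_push, h2]
    rw [h1]
    exact entPMF_push_inj _ fun a b hab => congrArg Prod.snd hab
  rw [← e1, e2]

lemma push_smul [Fintype τ] [Fintype α] (c : ℝ) (p : τ → ℝ) (g : τ → α) (a : α) :
    push (fun s => c * p s) g a = c * push p g a := by
  simp only [push, Finset.mul_sum, mul_ite, mul_zero]

lemma push_mix {n : ℕ} [Fintype τ] [Fintype β] (r : Fin n × τ → ℝ) (G : Fin n → τ → β)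
    (b : β) (j : Fin n) :
    push r (fun s => (G s.1 s.2, s.1)) (b, j) = push (fun t => r (j, t)) (G j) b := by
  simp only [push]
  rw [Fintype.sum_prod_type, Finset.sum_eq_single j]
  · refine Finset.sum_congr rfl fun t _ => ?_
    simp [Prod.ext_iff]
  · intro j' _ hj'
    apply Finset.sum_eq_zero
    intro t _
    simp [Prod.ext_iff, hj']
  · simp

lemma push_nomix {n : ℕ} [Fintype τ] [Fintype β] (r : Fin n × τ → ℝ) (G : Fin n → τ → β)
    (b : β) :
    push r (fun s => G s.1 s.2) b = ∑ j, push (fun t => r (j, t)) (G j) b := by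
  simp only [push]
  rw [Fintype.sum_prod_type]

lemma ent_mix {n : ℕ} [Fintype β] (hn : 0 < n) (s : Fin n → β → ℝ)
    (hs1 : ∀ j, ∑ b, s j b = 1) :
    entPMF (fun bj : β × Fin n => (1 / (n : ℝ)) * s bj.2 bj.1)
      = Real.logb 2 n + (1 / (n : ℝ)) * ∑ j, entPMF (s j) := by
  have hn0 : (n : ℝ) ≠ 0 := Nat.cast_ne_zero.2 hn.ne'
  simp only [entPMF]
  rw [Fintype.sum_prod_type, Finset.sum_comm]
  have key : ∀ (j : Fin n) (b : β),
      (1 / (n : ℝ)) * s j b * Real.logb 2 ((1 / (n : ℝ)) * s j b)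
        = (1 / (n : ℝ)) * (s j b * Real.logb 2 (1 / (n : ℝ)))
          + (1 / (n : ℝ)) * (s j b * Real.logb 2 (s j b)) := by
    intro j b
    by_cases hb : s j b = 0
    · simp [hb]
    · rw [Real.logb_mul (by positivity) hb]; ring
  have hrow : ∀ j : Fin n,
      ∑ b, (1 / (n : ℝ)) * s j b * Real.logb 2 ((1 / (n : ℝ)) * s j b)
        = (1 / (n : ℝ)) * Real.logb 2 (1 / (n : ℝ))
          + (1 / (n : ℝ)) * ∑ b, s j b * Real.logb 2 (s j b) := by
    intro j
    rw [Finset.sum_congr rfl fun b _ => key j b, Finset.sum_add_distrib,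
      ← Finset.mul_sum, ← Finset.mul_sum, ← Finset.sum_mul, hs1 j]
    ring
  rw [Finset.sum_congr rfl fun j _ => hrow j, Finset.sum_add_distrib, Finset.sum_const,
    Finset.card_univ, Fintype.card_fin, ← Finset.mul_sum]
  have hlog : Real.logb 2 (1 / (n : ℝ)) = - Real.logb 2 (n : ℝ) := by
    rw [one_div, Real.logb_inv]
  rw [hlog]
  simp only [nsmul_eq_mul]
  field_simp
  rw [Finset.sum_neg_distrib]
  ring

lemma sum_prod_pi {𝒳 : Type*} [Fintype 𝒳] : ∀ {n : ℕ} (f : Fin n → 𝒳 → ℝ),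
    ∑ v : Fin n → 𝒳, ∏ i, f i (v i) = ∏ i, ∑ a, f i a := by
  intro n
  induction n with
  | zero => intro f; simp
  | succ m ih =>
    intro f
    rw [← (Fin.consEquiv (fun _ : Fin (m + 1) => 𝒳)).sum_comp (fun v => ∏ i, f i (v i))]
    rw [Fintype.sum_prod_type]
    have : ∀ (a : 𝒳) (w : Fin m → 𝒳),
        ∏ i, f i ((Fin.consEquiv (fun _ : Fin (m+1) => 𝒳)) (a, w) i)
          = f 0 a * ∏ i : Fin m, f i.succ (w i) := by
      intro a w
      rw [Fin.prod_univ_succ]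
      simp [Fin.consEquiv]
    simp only [this]
    rw [Fin.prod_univ_succ, ← ih (fun i a => f i.succ a)]
    rw [← Finset.sum_mul_sum]

lemma push_eval {𝒳 : Type*} [Fintype 𝒳] {n : ℕ} (rr : 𝒳 → ℝ) (h1 : ∑ a, rr a = 1)
    (j : Fin n) :
    push (fun v : Fin n → 𝒳 => ∏ i, rr (v i)) (fun v => v j) = rr := by
  funext a
  simp only [push]
  have key : ∀ v : Fin n → 𝒳, (if v j = a then ∏ i, rr (v i) else 0)
      = ∏ i, (fun (i : Fin n) (c : 𝒳) => if i = j then (if c = a then rr c else 0) else rr c) i (v i) := by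
    intro v
    by_cases hv : v j = a
    · rw [if_pos hv]
      refine Finset.prod_congr rfl fun i _ => ?_
      by_cases hij : i = j
      · subst hij; simp [hv]
      · simp [hij]
    · rw [if_neg hv]
      refine (Finset.prod_eq_zero (Finset.mem_univ j) ?_).symm
      simp [hv]
  rw [Finset.sum_congr rfl fun v _ => key v,
    sum_prod_pi (fun (i : Fin n) (c : 𝒳) => if i = j then (if c = a then rr c else 0) else rr c)]
  rw [Finset.prod_eq_single j]
  · simp [Finset.sum_ite_eq']
  · intro i _ hij
    simp [hij, h1]
  · simp

lemma ent_prod {𝒳 : Type*} [Fintype 𝒳] {n : ℕ} (rr : 𝒳 → ℝ) (h1 : ∑ a, rr a = 1) :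
    entPMF (fun v : Fin n → 𝒳 => ∏ i, rr (v i)) = n * entPMF rr := by
  simp only [entPMF]
  have key : ∀ v : Fin n → 𝒳, (∏ i, rr (v i)) * Real.logb 2 (∏ i, rr (v i))
      = ∑ j, ∏ i, (fun (i : Fin n) (c : 𝒳) =>
          rr c * (if i = j then Real.logb 2 (rr c) else 1)) i (v i) := by
    intro v
    by_cases hz : ∀ i, rr (v i) ≠ 0
    · rw [Real.logb_prod _ _ fun i _ => hz i, Finset.mul_sum]
      refine Finset.sum_congr rfl fun j _ => ?_
      rw [Finset.prod_mul_distrib]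
      simp only [Finset.prod_ite_eq', Finset.mem_univ, if_pos]
    · push_neg at hz
      obtain ⟨i₀, hi₀⟩ := hz
      rw [Finset.prod_eq_zero (Finset.mem_univ i₀) hi₀, zero_mul]
      refine (Finset.sum_eq_zero fun j _ => ?_).symm
      refine Finset.prod_eq_zero (Finset.mem_univ i₀) ?_
      simp [hi₀]
  rw [Finset.sum_congr rfl fun v _ => key v, Finset.sum_comm]
  have hrow : ∀ j : Fin n,
      (∑ v : Fin n → 𝒳, ∏ i, (fun (i : Fin n) (c : 𝒳) =>
          rr c * (if i = j then Real.logb 2 (rr c) else 1)) i (v i))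
        = ∑ c, rr c * Real.logb 2 (rr c) := by
    intro j
    rw [sum_prod_pi (fun (i : Fin n) (c : 𝒳) =>
      rr c * (if i = j then Real.logb 2 (rr c) else 1))]
    rw [Finset.prod_eq_single j]
    · simp
    · intro i _ hij
      simp [hij, h1]
    · simp
  rw [Finset.sum_congr rfl fun j _ => hrow j, Finset.sum_const, Finset.card_univ,
    Fintype.card_fin, nsmul_eq_mul]
  ring

lemma dist_isPMF {Ω : Type*} [Fintype Ω] [Fintype τ] {μ : Ω → ℝ} (hμ : IsPMF μ)
    (Z : Ω → τ) : IsPMF (dist μ Z) := by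
  constructor
  · intro t
    exact Finset.sum_nonneg fun ω _ => by split_ifs; exacts [hμ.1 ω, le_rfl]
  · simp only [dist]
    rw [Finset.sum_comm]
    have hrow : ∀ ω : Ω, (∑ t : τ, if Z ω = t then μ ω else 0) = μ ω := by
      intro ω; simp [Finset.sum_ite_eq]
    rw [Finset.sum_congr rfl fun ω _ => hrow ω]
    exact hμ.2

def Cmap {𝒦 𝒳 𝒴 : Type} {n : ℕ} (m : ℕ) :
    𝒦 × (Fin n → 𝒳) × (Fin n → 𝒴) → 𝒦 × (Fin n → Option 𝒳) × (Fin n → Option 𝒴) :=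
  fun t => (t.1, fun i => if (i : ℕ) < m then some (t.2.1 i) else none,
    fun i => if m ≤ (i : ℕ) then some (t.2.2 i) else none)


lemma push_mix' {n : ℕ} [Fintype τ] [Fintype β] (c : ℝ) (p : τ → ℝ) (G : Fin n → τ → β) :
    push (fun s : Fin n × τ => c * p s.2) (fun s => (G s.1 s.2, s.1))
      = fun bj : β × Fin n => c * push p (G bj.2) bj.1 := by
  funext bj
  obtain ⟨b, j⟩ := bj
  simp only [push]
  rw [Fintype.sum_prod_type, Finset.sum_eq_single j]
  · rw [Finset.mul_sum]
    refine Finset.sum_congr rfl fun t _ => ?_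
    by_cases h : G j t = b <;> simp [h, Prod.ext_iff]
  · intro j' _ hj'
    apply Finset.sum_eq_zero
    intro t _
    simp [Prod.ext_iff, hj']
  · simp

lemma push_nomix' {n : ℕ} [Fintype τ] [Fintype β] (c : ℝ) (p : τ → ℝ) (G : Fin n → τ → β)
    (b : β) :
    push (fun s : Fin n × τ => c * p s.2) (fun s => G s.1 s.2) b
      = ∑ j, c * push p (G j) b := by
  simp only [push]
  rw [Fintype.sum_prod_type]
  refine Finset.sum_congr rfl fun j _ => ?_
  rw [Finset.mul_sum]
  refine Finset.sum_congr rfl fun t _ => ?_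
  by_cases h : G j t = b <;> simp [h]

/-- Single-letter identity for the mutual-information difference: with i.i.d.
pairs `(X_i, Y_i) ∼ Q`, any `K`, `J` uniform on `{1,…,n}` and independent of
`(K, X^n, Y^n)`, and `U = (K, X^{J−1}, Y_{J+1}^n, J)`,
`I(K;X^n) − I(K;Y^n) = n·[I(U;X_J) − I(U;Y_J)]`. -/
theorem single_letter_difference_identity
    {Ω 𝒳 𝒴 𝒦 : Type} [Fintype Ω] [Fintype 𝒳] [Fintype 𝒴] [Fintype 𝒦]
    (μ : Ω → ℝ) (hμ : IsPMF μ) {n : ℕ}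
    (Q : 𝒳 × 𝒴 → ℝ) (hQ : IsPMF Q)
    (X : Ω → Fin n → 𝒳) (Y : Ω → Fin n → 𝒴)
    (hiid : ∀ (xv : Fin n → 𝒳) (yv : Fin n → 𝒴),
      dist μ (fun ω => (X ω, Y ω)) (xv, yv) = ∏ i, Q (xv i, yv i))
    (K : Ω → 𝒦) (J : Ω → Fin n)
    (hJ : ∀ (j : Fin n) (t : 𝒦 × (Fin n → 𝒳) × (Fin n → 𝒴)),
      dist μ (fun ω => (J ω, K ω, X ω, Y ω)) (j, t)
        = (1 / (n : ℝ)) * dist μ (fun ω => (K ω, X ω, Y ω)) t) :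
    MI μ K X - MI μ K Y =
      (n : ℝ) * (MI μ
          (fun ω => (K ω, maskPre (X ω) (J ω), maskSuf (Y ω) (J ω), J ω))
          (fun ω => X ω (J ω))
        - MI μ
          (fun ω => (K ω, maskPre (X ω) (J ω), maskSuf (Y ω) (J ω), J ω))
          (fun ω => Y ω (J ω))) := by
  classical
  have hΩ : Nonempty Ω := by
    by_contra hc
    rw [not_nonempty_iff] at hc
    have h0 : ∑ ω : Ω, μ ω = 0 := by simp
    rw [hμ.2] at h0
    exact one_ne_zero h0
  obtain ⟨ω₀⟩ := hΩ
  have hn : 0 < n := Nat.pos_of_ne_zero fun h => by subst h; exact (J ω₀).elim0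
  have hn0 : (n : ℝ) ≠ 0 := Nat.cast_ne_zero.2 hn.ne'
  have x₀ : 𝒳 := X ω₀ ⟨0, hn⟩
  have y₀ : 𝒴 := Y ω₀ ⟨0, hn⟩
  set p : 𝒦 × (Fin n → 𝒳) × (Fin n → 𝒴) → ℝ :=
    dist μ (fun ω => (K ω, X ω, Y ω)) with hpdef
  have hppmf : IsPMF p := dist_isPMF hμ _
  have hr : dist μ (fun ω => (J ω, K ω, X ω, Y ω))
      = fun s : Fin n × (𝒦 × (Fin n → 𝒳) × (Fin n → 𝒴)) => (1 / (n : ℝ)) * p s.2 := by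
    funext s
    obtain ⟨j, t⟩ := s
    exact hJ j t
  have hDr : ∀ {α : Type} [Fintype α] (g : Fin n × (𝒦 × (Fin n → 𝒳) × (Fin n → 𝒴)) → α),
      dist μ (fun ω => g (J ω, (K ω, X ω, Y ω)))
        = push (fun s : Fin n × (𝒦 × (Fin n → 𝒳) × (Fin n → 𝒴)) => (1 / (n : ℝ)) * p s.2) g := by
    intro α _ g
    have h1 := dist_comp_s9 μ (fun ω => (J ω, K ω, X ω, Y ω)) g
    rw [hr] at h1
    exact h1
  -- marginals
  have hXY : push p (fun t => t.2)
      = fun s : (Fin n → 𝒳) × (Fin n → 𝒴) => ∏ i, Q (s.1 i, s.2 i) := by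
    have h1 : dist μ (fun ω => (X ω, Y ω)) = push p (fun t => t.2) :=
      dist_comp_s9 μ (fun ω => (K ω, X ω, Y ω)) (fun t => t.2)
    rw [← h1]
    funext s
    obtain ⟨xv, yv⟩ := s
    exact hiid xv yv
  have hPX : push p (fun t => t.2.1) = fun xv : Fin n → 𝒳 => ∏ i, margFst Q (xv i) := by
    have h1 : push p (fun t => t.2.1)
        = push (push p (fun t => t.2)) Prod.fst := by
      rw [push_push]
    rw [h1, hXY]
    funext xv
    simp only [push]
    rw [Fintype.sum_prod_type]
    rw [Finset.sum_eq_single xv]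
    · have h2 : (∑ yv : Fin n → 𝒴, ∏ i, Q (xv i, yv i)) = ∏ i, margFst Q (xv i) := by
        rw [sum_prod_pi (fun (i : Fin n) (b : 𝒴) => Q (xv i, b))]
        rfl
      rw [← h2]
      refine Finset.sum_congr rfl fun yv _ => ?_
      simp
    · intro x' _ hx'
      apply Finset.sum_eq_zero
      intro yv _
      simp [hx']
    · simp
  have hPY : push p (fun t => t.2.2) = fun yv : Fin n → 𝒴 => ∏ i, margSnd Q (yv i) := by
    have h1 : push p (fun t => t.2.2)
        = push (push p (fun t => t.2)) Prod.snd := by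
      rw [push_push]
    rw [h1, hXY]
    funext yv
    simp only [push]
    rw [Fintype.sum_prod_type, Finset.sum_comm]
    rw [Finset.sum_eq_single yv]
    · have h2 : (∑ xv : Fin n → 𝒳, ∏ i, Q (xv i, yv i)) = ∏ i, margSnd Q (yv i) := by
        rw [sum_prod_pi (fun (i : Fin n) (a : 𝒳) => Q (a, yv i))]
        rfl
      rw [← h2]
      refine Finset.sum_congr rfl fun xv _ => ?_
      simp
    · intro y' _ hy'
      apply Finset.sum_eq_zero
      intro xv _
      simp [hy']
    · simp
  have hQF : ∑ a, margFst Q a = 1 := by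
    simp only [margFst]
    rw [← Fintype.sum_prod_type]
    exact hQ.2
  have hQS : ∑ b, margSnd Q b = 1 := by
    simp only [margSnd]
    rw [Finset.sum_comm, ← Fintype.sum_prod_type]
    exact hQ.2
  have hXj : ∀ j : Fin n, push p (fun t => t.2.1 j) = margFst Q := by
    intro j
    have h1 := push_push p (fun t => t.2.1) (fun xv : Fin n → 𝒳 => xv j)
    rw [← h1, hPX, push_eval (margFst Q) hQF j]
  have hYj : ∀ j : Fin n, push p (fun t => t.2.2 j) = margSnd Q := by
    intro j
    have h1 := push_push p (fun t => t.2.2) (fun yv : Fin n → 𝒴 => yv j)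
    rw [← h1, hPY, push_eval (margSnd Q) hQS j]
  -- entropies of the full strings
  have hHXn : H μ X = (n : ℝ) * entPMF (margFst Q) := by
    have h1 : dist μ X = push p (fun t => t.2.1) :=
      dist_comp_s9 μ (fun ω => (K ω, X ω, Y ω)) (fun t => t.2.1)
    calc H μ X = entPMF (dist μ X) := rfl
      _ = _ := by rw [h1, hPX, ent_prod (margFst Q) hQF]
  have hHYn : H μ Y = (n : ℝ) * entPMF (margSnd Q) := by
    have h1 : dist μ Y = push p (fun t => t.2.2) :=
      dist_comp_s9 μ (fun ω => (K ω, X ω, Y ω)) (fun t => t.2.2)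
    calc H μ Y = entPMF (dist μ Y) := rfl
      _ = _ := by rw [h1, hPY, ent_prod (margSnd Q) hQS]
  -- entropies of X_J and Y_J
  have hHXJ : H μ (fun ω => X ω (J ω)) = entPMF (margFst Q) := by
    have h1 : dist μ (fun ω => X ω (J ω))
        = push (fun s : Fin n × (𝒦 × (Fin n → 𝒳) × (Fin n → 𝒴)) => (1 / (n : ℝ)) * p s.2)
            (fun s => s.2.2.1 s.1) := hDr (fun s => s.2.2.1 s.1)
    have h2 : push (fun s : Fin n × (𝒦 × (Fin n → 𝒳) × (Fin n → 𝒴)) => (1 / (n : ℝ)) * p s.2)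
        (fun s => s.2.2.1 s.1) = margFst Q := by
      funext b
      rw [push_nomix' (1 / (n : ℝ)) p (fun j t => t.2.1 j) b]
      have h3 : ∀ j : Fin n, (1 / (n : ℝ)) * push p (fun t => t.2.1 j) b
          = (1 / (n : ℝ)) * margFst Q b := fun j => by rw [hXj j]
      rw [Finset.sum_congr rfl fun j _ => h3 j, Finset.sum_const, Finset.card_univ,
        Fintype.card_fin, nsmul_eq_mul]
      field_simp
    calc H μ (fun ω => X ω (J ω)) = entPMF (dist μ (fun ω => X ω (J ω))) := rfl
      _ = _ := by rw [h1, h2]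
  have hHYJ : H μ (fun ω => Y ω (J ω)) = entPMF (margSnd Q) := by
    have h1 : dist μ (fun ω => Y ω (J ω))
        = push (fun s : Fin n × (𝒦 × (Fin n → 𝒳) × (Fin n → 𝒴)) => (1 / (n : ℝ)) * p s.2)
            (fun s => s.2.2.2 s.1) := hDr (fun s => s.2.2.2 s.1)
    have h2 : push (fun s : Fin n × (𝒦 × (Fin n → 𝒳) × (Fin n → 𝒴)) => (1 / (n : ℝ)) * p s.2)
        (fun s => s.2.2.2 s.1) = margSnd Q := by
      funext b
      rw [push_nomix' (1 / (n : ℝ)) p (fun j t => t.2.2 j) b]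
      have h3 : ∀ j : Fin n, (1 / (n : ℝ)) * push p (fun t => t.2.2 j) b
          = (1 / (n : ℝ)) * margSnd Q b := fun j => by rw [hYj j]
      rw [Finset.sum_congr rfl fun j _ => h3 j, Finset.sum_const, Finset.card_univ,
        Fintype.card_fin, nsmul_eq_mul]
      field_simp
    calc H μ (fun ω => Y ω (J ω)) = entPMF (dist μ (fun ω => Y ω (J ω))) := rfl
      _ = _ := by rw [h1, h2]
  -- entropy of (U, X_J)
  have hHUXJ : H μ (fun ω => ((K ω, maskPre (X ω) (J ω), maskSuf (Y ω) (J ω), J ω), X ω (J ω)))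
      = Real.logb 2 n + (1 / (n : ℝ)) * ∑ j : Fin n, entPMF (push p (Cmap ((j : ℕ) + 1))) := by
    have h1 : dist μ (fun ω => ((K ω, maskPre (X ω) (J ω), maskSuf (Y ω) (J ω), J ω), X ω (J ω)))
        = push (fun s : Fin n × (𝒦 × (Fin n → 𝒳) × (Fin n → 𝒴)) => (1 / (n : ℝ)) * p s.2)
            (fun s => ((s.2.1, maskPre s.2.2.1 s.1, maskSuf s.2.2.2 s.1, s.1), s.2.2.1 s.1)) :=
      hDr (fun s => ((s.2.1, maskPre s.2.2.1 s.1, maskSuf s.2.2.2 s.1, s.1), s.2.2.1 s.1))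
    have h2 : entPMF (push (fun s : Fin n × (𝒦 × (Fin n → 𝒳) × (Fin n → 𝒴)) => (1 / (n : ℝ)) * p s.2)
          (fun s => ((s.2.1, maskPre s.2.2.1 s.1, maskSuf s.2.2.2 s.1, s.1), s.2.2.1 s.1)))
        = entPMF (push (fun s : Fin n × (𝒦 × (Fin n → 𝒳) × (Fin n → 𝒴)) => (1 / (n : ℝ)) * p s.2)
          (fun s => (((s.2.1, maskPre s.2.2.1 s.1, maskSuf s.2.2.2 s.1), s.2.2.1 s.1), s.1))) :=
      ent_push_congr _ _ _
        (fun z => (((z.1.1, z.1.2.1, z.1.2.2.1), z.2), z.1.2.2.2))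
        (fun w => ((w.1.1.1, w.1.1.2.1, w.1.1.2.2, w.2), w.1.2))
        (fun _ => rfl) (fun _ => rfl)
    have h3 : push (fun s : Fin n × (𝒦 × (Fin n → 𝒳) × (Fin n → 𝒴)) => (1 / (n : ℝ)) * p s.2)
          (fun s => (((s.2.1, maskPre s.2.2.1 s.1, maskSuf s.2.2.2 s.1), s.2.2.1 s.1), s.1))
        = fun bj => (1 / (n : ℝ)) *
            push p (fun t => ((t.1, maskPre t.2.1 bj.2, maskSuf t.2.2 bj.2), t.2.1 bj.2)) bj.1 :=
      push_mix' (1 / (n : ℝ)) p (fun j t => ((t.1, maskPre t.2.1 j, maskSuf t.2.2 j), t.2.1 j))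
    have h4 : ∀ j : Fin n,
        entPMF (push p (fun t => ((t.1, maskPre t.2.1 j, maskSuf t.2.2 j), t.2.1 j)))
          = entPMF (push p (Cmap ((j : ℕ) + 1))) := by
      intro j
      refine ent_push_congr p _ _
        (fun z => (z.1.1, fun i => if (i : ℕ) = (j : ℕ) then some z.2 else z.1.2.1 i, z.1.2.2))
        (fun w => ((w.1, fun i => if (i : ℕ) < (j : ℕ) then w.2.1 i else none, w.2.2),
          (w.2.1 j).getD x₀)) ?_ ?_
      · intro t
        simp only [Cmap, maskPre, maskSuf, Prod.mk.injEq]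
        refine ⟨by trivial, ?_, ?_⟩
        · funext i
          try simp only [Cmap, maskPre, maskSuf]
          by_cases hij : (i : ℕ) = (j : ℕ)
          · have hij' : i = j := Fin.ext hij
            subst hij'
            simp
          · rw [if_neg hij]
            by_cases hlt : (i : ℕ) < (j : ℕ)
            · rw [if_pos hlt, if_pos (by omega)]
            · rw [if_neg hlt, if_neg (by omega)]
        · funext i
          try simp only [Cmap, maskPre, maskSuf]
          by_cases h : (j : ℕ) < (i : ℕ)
          · rw [if_pos h, if_pos (by omega)]
          · rw [if_neg h, if_neg (by omega)]
      · intro t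
        simp only [Cmap, maskPre, maskSuf, Prod.mk.injEq]
        refine ⟨⟨by trivial, ?_, ?_⟩, ?_⟩
        · funext i
          try simp only [Cmap, maskPre, maskSuf]
          by_cases hlt : (i : ℕ) < (j : ℕ)
          · rw [if_pos hlt, if_pos (by omega), if_pos hlt]
          · rw [if_neg hlt, if_neg hlt]
        · funext i
          try simp only [Cmap, maskPre, maskSuf]
          by_cases h : (j : ℕ) + 1 ≤ (i : ℕ)
          · rw [if_pos h, if_pos (by omega)]
          · rw [if_neg h, if_neg (by omega)]
        · rw [if_pos (by omega)]
          rfl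
    have h5 : ∀ j : Fin n,
        ∑ b, push p (fun t => ((t.1, maskPre t.2.1 j, maskSuf t.2.2 j), t.2.1 j)) b = 1 := by
      intro j
      rw [push_sum]
      exact hppmf.2
    calc H μ (fun ω => ((K ω, maskPre (X ω) (J ω), maskSuf (Y ω) (J ω), J ω), X ω (J ω)))
        = entPMF (dist μ (fun ω =>
            ((K ω, maskPre (X ω) (J ω), maskSuf (Y ω) (J ω), J ω), X ω (J ω)))) := rfl
      _ = _ := by
        rw [h1, h2, h3,
          ent_mix hn (fun j => push p
            (fun t => ((t.1, maskPre t.2.1 j, maskSuf t.2.2 j), t.2.1 j))) h5,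
          Finset.sum_congr rfl fun j _ => h4 j]
  -- entropy of (U, Y_J)
  have hHUYJ : H μ (fun ω => ((K ω, maskPre (X ω) (J ω), maskSuf (Y ω) (J ω), J ω), Y ω (J ω)))
      = Real.logb 2 n + (1 / (n : ℝ)) * ∑ j : Fin n, entPMF (push p (Cmap (j : ℕ))) := by
    have h1 : dist μ (fun ω => ((K ω, maskPre (X ω) (J ω), maskSuf (Y ω) (J ω), J ω), Y ω (J ω)))
        = push (fun s : Fin n × (𝒦 × (Fin n → 𝒳) × (Fin n → 𝒴)) => (1 / (n : ℝ)) * p s.2)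
            (fun s => ((s.2.1, maskPre s.2.2.1 s.1, maskSuf s.2.2.2 s.1, s.1), s.2.2.2 s.1)) :=
      hDr (fun s => ((s.2.1, maskPre s.2.2.1 s.1, maskSuf s.2.2.2 s.1, s.1), s.2.2.2 s.1))
    have h2 : entPMF (push (fun s : Fin n × (𝒦 × (Fin n → 𝒳) × (Fin n → 𝒴)) => (1 / (n : ℝ)) * p s.2)
          (fun s => ((s.2.1, maskPre s.2.2.1 s.1, maskSuf s.2.2.2 s.1, s.1), s.2.2.2 s.1)))
        = entPMF (push (fun s : Fin n × (𝒦 × (Fin n → 𝒳) × (Fin n → 𝒴)) => (1 / (n : ℝ)) * p s.2)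
          (fun s => (((s.2.1, maskPre s.2.2.1 s.1, maskSuf s.2.2.2 s.1), s.2.2.2 s.1), s.1))) :=
      ent_push_congr _ _ _
        (fun z => (((z.1.1, z.1.2.1, z.1.2.2.1), z.2), z.1.2.2.2))
        (fun w => ((w.1.1.1, w.1.1.2.1, w.1.1.2.2, w.2), w.1.2))
        (fun _ => rfl) (fun _ => rfl)
    have h3 : push (fun s : Fin n × (𝒦 × (Fin n → 𝒳) × (Fin n → 𝒴)) => (1 / (n : ℝ)) * p s.2)
          (fun s => (((s.2.1, maskPre s.2.2.1 s.1, maskSuf s.2.2.2 s.1), s.2.2.2 s.1), s.1))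
        = fun bj => (1 / (n : ℝ)) *
            push p (fun t => ((t.1, maskPre t.2.1 bj.2, maskSuf t.2.2 bj.2), t.2.2 bj.2)) bj.1 :=
      push_mix' (1 / (n : ℝ)) p (fun j t => ((t.1, maskPre t.2.1 j, maskSuf t.2.2 j), t.2.2 j))
    have h4 : ∀ j : Fin n,
        entPMF (push p (fun t => ((t.1, maskPre t.2.1 j, maskSuf t.2.2 j), t.2.2 j)))
          = entPMF (push p (Cmap (j : ℕ))) := by
      intro j
      refine ent_push_congr p _ _
        (fun z => (z.1.1, z.1.2.1, fun i => if (i : ℕ) = (j : ℕ) then some z.2 else z.1.2.2 i))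
        (fun w => ((w.1, w.2.1, fun i => if (j : ℕ) < (i : ℕ) then w.2.2 i else none),
          (w.2.2 j).getD y₀)) ?_ ?_
      · intro t
        simp only [Cmap, maskPre, maskSuf, Prod.mk.injEq]
        refine ⟨by trivial, by trivial, ?_⟩
        · funext i
          try simp only [Cmap, maskPre, maskSuf]
          by_cases hij : (i : ℕ) = (j : ℕ)
          · have hij' : i = j := Fin.ext hij
            subst hij'
            simp
          · rw [if_neg hij]
            by_cases hlt : (j : ℕ) < (i : ℕ)
            · rw [if_pos hlt, if_pos (by omega)]
            · rw [if_neg hlt, if_neg (by omega)]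
      · intro t
        simp only [Cmap, maskPre, maskSuf, Prod.mk.injEq]
        refine ⟨⟨by trivial, by trivial, ?_⟩, ?_⟩
        · funext i
          try simp only [Cmap, maskPre, maskSuf]
          by_cases hlt : (j : ℕ) < (i : ℕ)
          · rw [if_pos hlt, if_pos (by omega), if_pos hlt]
          · rw [if_neg hlt, if_neg hlt]
        · rw [if_pos (by omega)]
          rfl
    have h5 : ∀ j : Fin n,
        ∑ b, push p (fun t => ((t.1, maskPre t.2.1 j, maskSuf t.2.2 j), t.2.2 j)) b = 1 := by
      intro j
      rw [push_sum]
      exact hppmf.2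
    calc H μ (fun ω => ((K ω, maskPre (X ω) (J ω), maskSuf (Y ω) (J ω), J ω), Y ω (J ω)))
        = entPMF (dist μ (fun ω =>
            ((K ω, maskPre (X ω) (J ω), maskSuf (Y ω) (J ω), J ω), Y ω (J ω)))) := rfl
      _ = _ := by
        rw [h1, h2, h3,
          ent_mix hn (fun j => push p
            (fun t => ((t.1, maskPre t.2.1 j, maskSuf t.2.2 j), t.2.2 j))) h5,
          Finset.sum_congr rfl fun j _ => h4 j]
  -- boundary values
  have hEn : entPMF (push p (Cmap n)) = H μ (fun ω => (K ω, X ω)) := by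
    have hd : dist μ (fun ω => (K ω, X ω)) = push p (fun t => (t.1, t.2.1)) :=
      dist_comp_s9 μ (fun ω => (K ω, X ω, Y ω)) (fun t => (t.1, t.2.1))
    have he : entPMF (push p (Cmap n)) = entPMF (push p (fun t => (t.1, t.2.1))) := by
      refine ent_push_congr p _ _
        (fun w => (w.1, fun i => (w.2.1 i).getD x₀))
        (fun z => (z.1, fun i => some (z.2 i), fun _ => none)) ?_ ?_
      · intro t
        simp only [Cmap, Prod.mk.injEq]
        refine ⟨by trivial, ?_⟩
        funext i
        try simp only [Cmap, maskPre, maskSuf]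
        rw [if_pos i.isLt]
        rfl
      · intro t
        simp only [Cmap, Prod.mk.injEq]
        refine ⟨by trivial, ?_, ?_⟩
        · funext i
          try simp only [Cmap, maskPre, maskSuf]
          rw [if_pos i.isLt]
        · funext i
          try simp only [Cmap, maskPre, maskSuf]
          rw [if_neg (by omega : ¬ n ≤ (i : ℕ))]
    calc entPMF (push p (Cmap n)) = entPMF (push p (fun t => (t.1, t.2.1))) := he
      _ = entPMF (dist μ (fun ω => (K ω, X ω))) := by rw [hd]
      _ = H μ (fun ω => (K ω, X ω)) := rfl
  have hE0 : entPMF (push p (Cmap 0)) = H μ (fun ω => (K ω, Y ω)) := by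
    have hd : dist μ (fun ω => (K ω, Y ω)) = push p (fun t => (t.1, t.2.2)) :=
      dist_comp_s9 μ (fun ω => (K ω, X ω, Y ω)) (fun t => (t.1, t.2.2))
    have he : entPMF (push p (Cmap 0)) = entPMF (push p (fun t => (t.1, t.2.2))) := by
      refine ent_push_congr p _ _
        (fun w => (w.1, fun i => (w.2.2 i).getD y₀))
        (fun z => (z.1, fun _ => none, fun i => some (z.2 i))) ?_ ?_
      · intro t
        simp only [Cmap, Prod.mk.injEq]
        refine ⟨by trivial, ?_⟩
        funext i
        try simp only [Cmap, maskPre, maskSuf]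
        rw [if_pos (by omega : 0 ≤ (i : ℕ))]
        rfl
      · intro t
        simp only [Cmap, Prod.mk.injEq]
        refine ⟨by trivial, ?_, ?_⟩
        · funext i
          try simp only [Cmap, maskPre, maskSuf]
          rw [if_neg (by omega : ¬ (i : ℕ) < 0)]
        · funext i
          try simp only [Cmap, maskPre, maskSuf]
          rw [if_pos (by omega : 0 ≤ (i : ℕ))]
    calc entPMF (push p (Cmap 0)) = entPMF (push p (fun t => (t.1, t.2.2))) := he
      _ = entPMF (dist μ (fun ω => (K ω, Y ω))) := by rw [hd]
      _ = H μ (fun ω => (K ω, Y ω)) := rfl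
  -- telescoping
  have htel : (∑ j : Fin n, entPMF (push p (Cmap ((j : ℕ) + 1))))
        - (∑ j : Fin n, entPMF (push p (Cmap (j : ℕ))))
      = H μ (fun ω => (K ω, X ω)) - H μ (fun ω => (K ω, Y ω)) := by
    rw [← Finset.sum_sub_distrib,
      Fin.sum_univ_eq_sum_range
        (fun m => entPMF (push p (Cmap (m + 1))) - entPMF (push p (Cmap m))) n,
      Finset.sum_range_sub (fun m => entPMF (push p (Cmap m))), hEn, hE0]
  -- final assembly
  have hmul : (n : ℝ) * (1 / (n : ℝ)) = 1 := by field_simp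
  simp only [MI]
  rw [hHXn, hHYn, hHXJ, hHYJ, hHUXJ, hHUYJ]
  linear_combination ((n : ℝ) * (1 / (n : ℝ))) * htel
    + (H μ (fun ω => (K ω, X ω)) - H μ (fun ω => (K ω, Y ω))) * hmul

end CRGen
end
end

section
/- Auxiliary Markov chain in the converse: Let (X_i, Y_i), i = 1,…,n, be i.i.d. pairs of finite-valued random variables, let K = Φ(X^n) for a function Φ, let J be uniformly distributed on {1,…,n} and independent of (X^n, Y^n), and set U = (K, X₁,…,X_{J−1}, Y_{J+1},…,Y_n, J). Then U–X_J–Y_J is a Markov chain, i.e., U and Y_J are conditionally independent given X_J. -/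
open scoped BigOperators Classical

noncomputable section

namespace CRGen

section AuxLemmas

lemma dist_comp_s10 {Ω γ δ : Type*} [Fintype Ω] [Fintype γ] (μ : Ω → ℝ)
    (g : Ω → γ) (f : γ → δ) (d : δ) :
    dist μ (fun ω => f (g ω)) d = ∑ t, if f t = d then dist μ g t else 0 := by
  simp only [dist]
  have h1 : ∀ t : γ, (if f t = d then ∑ ω, if g ω = t then μ ω else 0 else 0)
      = ∑ ω, if g ω = t ∧ f t = d then μ ω else 0 := by
    intro t; split <;> simp_all
  rw [Finset.sum_congr rfl fun t _ => h1 t, Finset.sum_comm]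
  refine Finset.sum_congr rfl fun ω _ => ?_
  rw [Finset.sum_eq_single (g ω)]
  · simp
  · intro t _ ht; simp only [ite_eq_right_iff, and_imp]; intro h; exact absurd h.symm ht
  · simp

lemma sum_anchor {τ : Type*} [Fintype τ] {n : ℕ} (q : τ → ℝ) (hq : ∑ t, q t = 1)
    (j : Fin n) (c : τ) :
    ∑ zv : Fin n → τ, (if zv j = c then ∏ i, q (zv i) else 0) = q c := by
  have key : ∀ zv : Fin n → τ,
      (if zv j = c then ∏ i, q (zv i) else 0)
        = ∏ i, (if i = j then (if zv i = c then q (zv i) else 0) else q (zv i)) := by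
    intro zv
    have e1 : ∏ i, (if i = j then (if zv i = c then q (zv i) else 0) else q (zv i))
        = (if zv j = c then q (zv j) else 0) * ∏ i ∈ Finset.univ.erase j, q (zv i) := by
      rw [← Finset.mul_prod_erase Finset.univ _ (Finset.mem_univ j)]
      congr 1
      · simp
      · exact Finset.prod_congr rfl fun i hi => by simp [(Finset.mem_erase.mp hi).1]
    rw [e1]
    by_cases h : zv j = c
    · rw [if_pos h, if_pos h]
      exact (Finset.mul_prod_erase Finset.univ (fun i => q (zv i)) (Finset.mem_univ j)).symm
    · simp [h]
  rw [Finset.sum_congr rfl fun zv _ => key zv]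
  rw [← Fintype.prod_sum (fun i t => if i = j then (if t = c then q t else 0) else q t)]
  rw [← Finset.mul_prod_erase Finset.univ _ (Finset.mem_univ j)]
  have h3 : ∏ i ∈ Finset.univ.erase j,
      (∑ t, if i = j then (if t = c then q t else 0) else q t) = 1 := by
    refine Finset.prod_eq_one fun i hi => ?_
    simp [(Finset.mem_erase.mp hi).1, hq]
  rw [h3]
  simp [Finset.sum_ite_eq']

lemma sum_anchor_pair {𝒳 𝒴 : Type*} [Fintype 𝒳] [Fintype 𝒴] {n : ℕ}
    (Q : 𝒳 × 𝒴 → ℝ) (hQ : ∑ t, Q t = 1) (j : Fin n) (x : 𝒳) (y : 𝒴) :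
    ∑ xv : Fin n → 𝒳, ∑ yv : Fin n → 𝒴,
      (if xv j = x ∧ yv j = y then ∏ i, Q (xv i, yv i) else 0) = Q (x, y) := by
  have step1 : (∑ xv : Fin n → 𝒳, ∑ yv : Fin n → 𝒴,
      (if xv j = x ∧ yv j = y then ∏ i, Q (xv i, yv i) else 0))
      = ∑ p : (Fin n → 𝒳) × (Fin n → 𝒴),
        (if p.1 j = x ∧ p.2 j = y then ∏ i, Q (p.1 i, p.2 i) else 0) :=
    (Fintype.sum_prod_type
      (f := fun p : (Fin n → 𝒳) × (Fin n → 𝒴) =>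
        if p.1 j = x ∧ p.2 j = y then ∏ i, Q (p.1 i, p.2 i) else 0)).symm
  have step2 : (∑ p : (Fin n → 𝒳) × (Fin n → 𝒴),
      (if p.1 j = x ∧ p.2 j = y then ∏ i, Q (p.1 i, p.2 i) else 0))
      = ∑ zv : Fin n → 𝒳 × 𝒴, (if zv j = (x, y) then ∏ i, Q (zv i) else 0) := by
    refine (Fintype.sum_bijective (Equiv.arrowProdEquivProdArrow (Fin n) (fun _ => 𝒳) (fun _ => 𝒴))
      (Equiv.bijective _) _ _ fun zv => ?_).symm
    simp [Equiv.arrowProdEquivProdArrow, Prod.ext_iff]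
  refine (step1.trans step2).trans (Eq.trans ?_ (sum_anchor Q hQ j (x, y)))
  exact Finset.sum_congr rfl fun zv _ => by congr

lemma if_and_sum {𝒴 : Type*} [Fintype 𝒴] (A : Prop) (h : 𝒴) (w : ℝ) :
    (∑ y : 𝒴, if A ∧ h = y then w else 0) = if A then w else 0 := by
  rw [Finset.sum_eq_single h]
  · by_cases hA : A
    · rw [if_pos ⟨hA, rfl⟩, if_pos hA]
    · rw [if_neg (fun hc => hA hc.1), if_neg hA]
  · intro b _ hb; exact if_neg fun hc => hb hc.2.symm
  · simp

lemma sum_anchor_fst {𝒳 𝒴 : Type*} [Fintype 𝒳] [Fintype 𝒴] {n : ℕ}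
    (Q : 𝒳 × 𝒴 → ℝ) (hQ : ∑ t, Q t = 1) (j : Fin n) (x : 𝒳) :
    ∑ xv : Fin n → 𝒳, ∑ yv : Fin n → 𝒴,
      (if xv j = x then ∏ i, Q (xv i, yv i) else 0) = margFst Q x := by
  calc ∑ xv : Fin n → 𝒳, ∑ yv : Fin n → 𝒴,
        (if xv j = x then ∏ i, Q (xv i, yv i) else 0)
      = ∑ xv : Fin n → 𝒳, ∑ yv : Fin n → 𝒴, ∑ y : 𝒴,
          (if xv j = x ∧ yv j = y then ∏ i, Q (xv i, yv i) else 0) :=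
        Finset.sum_congr rfl fun xv _ => Finset.sum_congr rfl fun yv _ =>
          (if_and_sum _ _ _).symm
    _ = ∑ xv : Fin n → 𝒳, ∑ y : 𝒴, ∑ yv : Fin n → 𝒴,
          (if xv j = x ∧ yv j = y then ∏ i, Q (xv i, yv i) else 0) :=
        Finset.sum_congr rfl fun xv _ => Finset.sum_comm
    _ = ∑ y : 𝒴, ∑ xv : Fin n → 𝒳, ∑ yv : Fin n → 𝒴,
          (if xv j = x ∧ yv j = y then ∏ i, Q (xv i, yv i) else 0) := Finset.sum_comm
    _ = ∑ y : 𝒴, Q (x, y) := Finset.sum_congr rfl fun y _ => sum_anchor_pair Q hQ j x y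
    _ = margFst Q x := rfl

lemma maskSuf_update {𝒴 : Type} {n : ℕ} (yv : Fin n → 𝒴) (j : Fin n) (c : 𝒴) :
    maskSuf (Function.update yv j c) j = maskSuf yv j := by
  funext i
  unfold maskSuf
  by_cases h : (j : ℕ) < (i : ℕ)
  · rw [if_pos h, if_pos h, Function.update_of_ne (by exact fun hij => by simp [hij] at h)]
  · rw [if_neg h, if_neg h]

lemma sum_update_invariant {𝒴 : Type*} [Fintype 𝒴] {n : ℕ} (j : Fin n)
    (R : (Fin n → 𝒴) → Prop) (hR : ∀ yv c, R (Function.update yv j c) ↔ R yv)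
    (G : (Fin n → 𝒴) → ℝ) (hG : ∀ yv c, G (Function.update yv j c) = G yv)
    (y y' : 𝒴) :
    ∑ yv, (if R yv ∧ yv j = y then G yv else 0)
      = ∑ yv, (if R yv ∧ yv j = y' then G yv else 0) := by
  set f : (Fin n → 𝒴) → (Fin n → 𝒴) := fun yv => Function.update yv j (Equiv.swap y y' (yv j))
    with hf
  have hinv : Function.Involutive f := by
    intro yv
    funext i
    by_cases h : i = j
    · subst h
      simp [hf, Function.update_self]
    · simp [hf, Function.update_of_ne h]
  refine Fintype.sum_bijective f hinv.bijective _ _ fun yv => ?_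
  have h1 : R yv ↔ R (f yv) := (hR yv _).symm
  have h2 : G (f yv) = G yv := hG yv _
  have h3 : f yv j = Equiv.swap y y' (yv j) := Function.update_self _ _ _
  have h4 : (yv j = y) ↔ (f yv j = y') := by
    rw [h3]
    constructor
    · intro h; rw [h]; exact Equiv.swap_apply_left y y'
    · intro h
      have := (Equiv.swap y y').injective (a₁ := yv j) (a₂ := y)
      apply this
      rw [h, Equiv.swap_apply_left]
  by_cases hc : R yv ∧ yv j = y
  · rw [if_pos hc, if_pos ⟨h1.mp hc.1, h4.mp hc.2⟩, h2]
  · rw [if_neg hc, if_neg (fun hc2 => hc ⟨h1.mpr hc2.1, h4.mpr hc2.2⟩)]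

lemma core {𝒳 𝒴 : Type*} [Fintype 𝒳] [Fintype 𝒴] {n : ℕ}
    (Q : 𝒳 × 𝒴 → ℝ) (j : Fin n)
    (P : (Fin n → 𝒳) → Prop) (R : (Fin n → 𝒴) → Prop)
    (hR : ∀ yv c, R (Function.update yv j c) ↔ R yv)
    (x : 𝒳) (y : 𝒴) :
    (∑ xv, ∑ yv, if P xv ∧ R yv ∧ xv j = x ∧ yv j = y then ∏ i, Q (xv i, yv i) else 0)
      * margFst Q x
    = (∑ xv, ∑ yv, if P xv ∧ R yv ∧ xv j = x then ∏ i, Q (xv i, yv i) else 0)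
      * Q (x, y) := by
  set T : 𝒴 → ℝ := fun y₀ => ∑ xv, ∑ yv,
    (if P xv ∧ R yv ∧ xv j = x ∧ yv j = y₀ then
      ∏ i ∈ Finset.univ.erase j, Q (xv i, yv i) else 0) with hT
  have factor : ∀ y₀ : 𝒴,
      (∑ xv, ∑ yv, if P xv ∧ R yv ∧ xv j = x ∧ yv j = y₀ then ∏ i, Q (xv i, yv i) else 0)
        = Q (x, y₀) * T y₀ := by
    intro y₀
    rw [hT, Finset.mul_sum]
    refine Finset.sum_congr rfl fun xv _ => ?_
    rw [Finset.mul_sum]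
    refine Finset.sum_congr rfl fun yv _ => ?_
    by_cases hc : P xv ∧ R yv ∧ xv j = x ∧ yv j = y₀
    · rw [if_pos hc, if_pos hc,
        ← Finset.mul_prod_erase Finset.univ (fun i => Q (xv i, yv i)) (Finset.mem_univ j),
        hc.2.2.1, hc.2.2.2]
    · rw [if_neg hc, if_neg hc, mul_zero]
  have Tconst : ∀ y₀ : 𝒴, T y₀ = T y := by
    intro y₀
    rw [hT]
    refine Finset.sum_congr rfl fun xv _ => ?_
    have := sum_update_invariant j (fun yv => P xv ∧ R yv ∧ xv j = x)
      (fun yv c => by simp only [hR])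
      (fun yv => ∏ i ∈ Finset.univ.erase j, Q (xv i, yv i))
      (fun yv c => Finset.prod_congr rfl fun i hi => by
        rw [Function.update_of_ne (Finset.mem_erase.mp hi).1]) y₀ y
    simpa only [and_assoc, and_comm, and_left_comm] using this
  have point : ∀ (xv : Fin n → 𝒳) (yv : Fin n → 𝒴),
      (∑ y₀ : 𝒴, if P xv ∧ R yv ∧ xv j = x ∧ yv j = y₀ then ∏ i, Q (xv i, yv i) else 0)
        = (if P xv ∧ R yv ∧ xv j = x then ∏ i, Q (xv i, yv i) else 0) := by
    intro xv yv
    rw [Finset.sum_eq_single (yv j)]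
    · by_cases hc : P xv ∧ R yv ∧ xv j = x
      · rw [if_pos ⟨hc.1, hc.2.1, hc.2.2, rfl⟩, if_pos hc]
      · rw [if_neg (fun h => hc ⟨h.1, h.2.1, h.2.2.1⟩), if_neg hc]
    · intro b _ hb; exact if_neg (fun h => hb h.2.2.2.symm)
    · simp
  have expand : (∑ xv, ∑ yv, if P xv ∧ R yv ∧ xv j = x then ∏ i, Q (xv i, yv i) else 0)
      = ∑ y₀, (∑ xv, ∑ yv,
          if P xv ∧ R yv ∧ xv j = x ∧ yv j = y₀ then ∏ i, Q (xv i, yv i) else 0) := by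
    conv_rhs => rw [Finset.sum_comm]
    refine Finset.sum_congr rfl fun xv _ => ?_
    conv_rhs => rw [Finset.sum_comm]
    refine Finset.sum_congr rfl fun yv _ => ?_
    exact (point xv yv).symm
  rw [factor y, expand]
  have : ∀ y₀ ∈ Finset.univ, (∑ xv, ∑ yv,
      if P xv ∧ R yv ∧ xv j = x ∧ yv j = y₀ then ∏ i, Q (xv i, yv i) else 0)
      = Q (x, y₀) * T y := fun y₀ _ => by rw [factor y₀, Tconst y₀]
  rw [Finset.sum_congr rfl this, ← Finset.sum_mul]
  show Q (x, y) * T y * margFst Q x = (∑ y₀, Q (x, y₀)) * T y * Q (x, y)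
  have hm : (∑ y₀, Q (x, y₀)) = margFst Q x := rfl
  rw [hm]
  ring

end AuxLemmas

/-- Auxiliary Markov chain in the converse: with i.i.d. pairs `(X_i, Y_i) ∼ Q`,
`K = Φ(X^n)`, `J` uniform on `{1,…,n}` independent of `(X^n, Y^n)`, and
`U = (K, X^{J−1}, Y_{J+1}^n, J)`, the chain `U – X_J – Y_J` is Markov, i.e. `U`
and `Y_J` are conditionally independent given `X_J`:
`P[U=u, X_J=x, Y_J=y]·P[X_J=x] = P[U=u, X_J=x]·P[X_J=x, Y_J=y]` for all `u,x,y`. -/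
theorem auxiliary_markov_chain
    {Ω 𝒳 𝒴 𝒦 : Type} [Fintype Ω] [Fintype 𝒳] [Fintype 𝒴] [Fintype 𝒦]
    (μ : Ω → ℝ) (hμ : IsPMF μ) {n : ℕ}
    (Q : 𝒳 × 𝒴 → ℝ) (hQ : IsPMF Q)
    (X : Ω → Fin n → 𝒳) (Y : Ω → Fin n → 𝒴)
    (hiid : ∀ (xv : Fin n → 𝒳) (yv : Fin n → 𝒴),
      dist μ (fun ω => (X ω, Y ω)) (xv, yv) = ∏ i, Q (xv i, yv i))
    (Φ : (Fin n → 𝒳) → 𝒦) (J : Ω → Fin n)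
    (hJ : ∀ (j : Fin n) (t : (Fin n → 𝒳) × (Fin n → 𝒴)),
      dist μ (fun ω => (J ω, X ω, Y ω)) (j, t)
        = (1 / (n : ℝ)) * dist μ (fun ω => (X ω, Y ω)) t) :
    ∀ (u : 𝒦 × (Fin n → Option 𝒳) × (Fin n → Option 𝒴) × Fin n) (x : 𝒳) (y : 𝒴),
      dist μ (fun ω =>
          ((Φ (X ω), maskPre (X ω) (J ω), maskSuf (Y ω) (J ω), J ω),
            X ω (J ω), Y ω (J ω))) (u, x, y)
        * dist μ (fun ω => X ω (J ω)) x
      = dist μ (fun ω =>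
          ((Φ (X ω), maskPre (X ω) (J ω), maskSuf (Y ω) (J ω), J ω),
            X ω (J ω))) (u, x)
        * dist μ (fun ω => (X ω (J ω), Y ω (J ω))) (x, y) := by
  intro u x y
  obtain ⟨k, a, b, j₀⟩ := u
  have hn : (n : ℝ) ≠ 0 := Nat.cast_ne_zero.mpr (Fin.pos j₀).ne'
  have hg : ∀ (j : Fin n) (xv : Fin n → 𝒳) (yv : Fin n → 𝒴),
      dist μ (fun ω => (J ω, X ω, Y ω)) (j, (xv, yv))
        = (1 / (n : ℝ)) * ∏ i, Q (xv i, yv i) := by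
    intro j xv yv
    rw [hJ j (xv, yv), hiid xv yv]
  -- the four distributions as explicit sums
  have E1 : dist μ (fun ω =>
        ((Φ (X ω), maskPre (X ω) (J ω), maskSuf (Y ω) (J ω), J ω),
          X ω (J ω), Y ω (J ω))) ((k, a, b, j₀), x, y)
      = ∑ t : Fin n × ((Fin n → 𝒳) × (Fin n → 𝒴)),
          if ((Φ t.2.1, maskPre t.2.1 t.1, maskSuf t.2.2 t.1, t.1), t.2.1 t.1, t.2.2 t.1)
              = ((k, a, b, j₀), x, y)
          then dist μ (fun ω => (J ω, X ω, Y ω)) t else 0 :=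
    (dist_comp_s10 μ (fun ω => (J ω, X ω, Y ω))
      (fun t => ((Φ t.2.1, maskPre t.2.1 t.1, maskSuf t.2.2 t.1, t.1), t.2.1 t.1, t.2.2 t.1))
      ((k, a, b, j₀), x, y)).trans (Finset.sum_congr rfl fun t _ => by congr)
  have E2 : dist μ (fun ω =>
        ((Φ (X ω), maskPre (X ω) (J ω), maskSuf (Y ω) (J ω), J ω),
          X ω (J ω))) ((k, a, b, j₀), x)
      = ∑ t : Fin n × ((Fin n → 𝒳) × (Fin n → 𝒴)),
          if ((Φ t.2.1, maskPre t.2.1 t.1, maskSuf t.2.2 t.1, t.1), t.2.1 t.1)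
              = ((k, a, b, j₀), x)
          then dist μ (fun ω => (J ω, X ω, Y ω)) t else 0 :=
    (dist_comp_s10 μ (fun ω => (J ω, X ω, Y ω))
      (fun t => ((Φ t.2.1, maskPre t.2.1 t.1, maskSuf t.2.2 t.1, t.1), t.2.1 t.1))
      ((k, a, b, j₀), x)).trans (Finset.sum_congr rfl fun t _ => by congr)
  have E3 : dist μ (fun ω => X ω (J ω)) x
      = ∑ t : Fin n × ((Fin n → 𝒳) × (Fin n → 𝒴)),
          if t.2.1 t.1 = x then dist μ (fun ω => (J ω, X ω, Y ω)) t else 0 :=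
    dist_comp_s10 μ (fun ω => (J ω, X ω, Y ω)) (fun t => t.2.1 t.1) x
  have E4 : dist μ (fun ω => (X ω (J ω), Y ω (J ω))) (x, y)
      = ∑ t : Fin n × ((Fin n → 𝒳) × (Fin n → 𝒴)),
          if (t.2.1 t.1, t.2.2 t.1) = (x, y)
          then dist μ (fun ω => (J ω, X ω, Y ω)) t else 0 :=
    (dist_comp_s10 μ (fun ω => (J ω, X ω, Y ω)) (fun t => (t.2.1 t.1, t.2.2 t.1))
      (x, y)).trans (Finset.sum_congr rfl fun t _ => by congr)
  -- closed forms
  have C4 : (∑ t : Fin n × ((Fin n → 𝒳) × (Fin n → 𝒴)),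
      if (t.2.1 t.1, t.2.2 t.1) = (x, y)
      then dist μ (fun ω => (J ω, X ω, Y ω)) t else 0) = Q (x, y) := by
    rw [Fintype.sum_prod_type]
    have hj : ∀ j : Fin n, (∑ p : (Fin n → 𝒳) × (Fin n → 𝒴),
        if (p.1 j, p.2 j) = (x, y)
        then dist μ (fun ω => (J ω, X ω, Y ω)) (j, p) else 0)
        = (1 / (n : ℝ)) * Q (x, y) := by
      intro j
      rw [Fintype.sum_prod_type, ← sum_anchor_pair Q hQ.2 j x y, Finset.mul_sum]
      refine Finset.sum_congr rfl fun xv _ => ?_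
      rw [Finset.mul_sum]
      refine Finset.sum_congr rfl fun yv _ => ?_
      rw [hg j xv yv]
      simp only [Prod.mk.injEq, mul_ite, mul_zero]
    rw [Finset.sum_congr rfl fun j _ => hj j, Finset.sum_const, Finset.card_univ,
      Fintype.card_fin, nsmul_eq_mul]
    field_simp
  have C3 : (∑ t : Fin n × ((Fin n → 𝒳) × (Fin n → 𝒴)),
      if t.2.1 t.1 = x then dist μ (fun ω => (J ω, X ω, Y ω)) t else 0)
      = margFst Q x := by
    rw [Fintype.sum_prod_type]
    have hj : ∀ j : Fin n, (∑ p : (Fin n → 𝒳) × (Fin n → 𝒴),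
        if p.1 j = x then dist μ (fun ω => (J ω, X ω, Y ω)) (j, p) else 0)
        = (1 / (n : ℝ)) * margFst Q x := by
      intro j
      rw [Fintype.sum_prod_type, ← sum_anchor_fst Q hQ.2 j x, Finset.mul_sum]
      refine Finset.sum_congr rfl fun xv _ => ?_
      rw [Finset.mul_sum]
      refine Finset.sum_congr rfl fun yv _ => ?_
      rw [hg j xv yv]
      simp only [mul_ite, mul_zero]
    rw [Finset.sum_congr rfl fun j _ => hj j, Finset.sum_const, Finset.card_univ,
      Fintype.card_fin, nsmul_eq_mul]
    field_simp
  have C1 : (∑ t : Fin n × ((Fin n → 𝒳) × (Fin n → 𝒴)),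
      if ((Φ t.2.1, maskPre t.2.1 t.1, maskSuf t.2.2 t.1, t.1), t.2.1 t.1, t.2.2 t.1)
          = ((k, a, b, j₀), x, y)
      then dist μ (fun ω => (J ω, X ω, Y ω)) t else 0)
      = (1 / (n : ℝ)) * ∑ xv : Fin n → 𝒳, ∑ yv : Fin n → 𝒴,
          (if (Φ xv = k ∧ maskPre xv j₀ = a) ∧ maskSuf yv j₀ = b ∧ xv j₀ = x ∧ yv j₀ = y
           then ∏ i, Q (xv i, yv i) else 0) := by
    rw [Fintype.sum_prod_type]
    rw [Finset.sum_eq_single j₀]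
    · rw [Fintype.sum_prod_type, Finset.mul_sum]
      refine Finset.sum_congr rfl fun xv _ => ?_
      rw [Finset.mul_sum]
      refine Finset.sum_congr rfl fun yv _ => ?_
      rw [hg j₀ xv yv]
      simp only [Prod.mk.injEq, eq_self_iff_true, and_true, mul_ite, mul_zero]
      exact if_congr (by tauto) rfl rfl
    · intro j _ hj
      refine Finset.sum_eq_zero fun p _ => if_neg fun h => hj ?_
      exact congrArg (fun q : ((𝒦 × (Fin n → Option 𝒳) × (Fin n → Option 𝒴) × Fin n) × 𝒳 × 𝒴)
        => q.1.2.2.2) h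
    · simp
  have C2 : (∑ t : Fin n × ((Fin n → 𝒳) × (Fin n → 𝒴)),
      if ((Φ t.2.1, maskPre t.2.1 t.1, maskSuf t.2.2 t.1, t.1), t.2.1 t.1)
          = ((k, a, b, j₀), x)
      then dist μ (fun ω => (J ω, X ω, Y ω)) t else 0)
      = (1 / (n : ℝ)) * ∑ xv : Fin n → 𝒳, ∑ yv : Fin n → 𝒴,
          (if (Φ xv = k ∧ maskPre xv j₀ = a) ∧ maskSuf yv j₀ = b ∧ xv j₀ = x
           then ∏ i, Q (xv i, yv i) else 0) := by
    rw [Fintype.sum_prod_type]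
    rw [Finset.sum_eq_single j₀]
    · rw [Fintype.sum_prod_type, Finset.mul_sum]
      refine Finset.sum_congr rfl fun xv _ => ?_
      rw [Finset.mul_sum]
      refine Finset.sum_congr rfl fun yv _ => ?_
      rw [hg j₀ xv yv]
      simp only [Prod.mk.injEq, eq_self_iff_true, and_true, mul_ite, mul_zero]
      exact if_congr (by tauto) rfl rfl
    · intro j _ hj
      refine Finset.sum_eq_zero fun p _ => if_neg fun h => hj ?_
      exact congrArg (fun q : ((𝒦 × (Fin n → Option 𝒳) × (Fin n → Option 𝒴) × Fin n) × 𝒳)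
        => q.1.2.2.2) h
    · simp
  rw [E1, E2, E3, E4, C1, C2, C3, C4]
  have hcore : (∑ xv : Fin n → 𝒳, ∑ yv : Fin n → 𝒴,
        (if (Φ xv = k ∧ maskPre xv j₀ = a) ∧ maskSuf yv j₀ = b ∧ xv j₀ = x ∧ yv j₀ = y
         then ∏ i, Q (xv i, yv i) else 0)) * margFst Q x
      = (∑ xv : Fin n → 𝒳, ∑ yv : Fin n → 𝒴,
        (if (Φ xv = k ∧ maskPre xv j₀ = a) ∧ maskSuf yv j₀ = b ∧ xv j₀ = x
         then ∏ i, Q (xv i, yv i) else 0)) * Q (x, y) := by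
    have h := core Q j₀ (fun xv => Φ xv = k ∧ maskPre xv j₀ = a)
      (fun yv => maskSuf yv j₀ = b)
      (fun yv c => by simp only [maskSuf_update]) x y
    refine Eq.trans ?_ (h.trans ?_)
    · exact congrArg (· * margFst Q x)
        (Finset.sum_congr rfl fun xv _ => Finset.sum_congr rfl fun yv _ => by congr)
    · exact congrArg (· * Q (x, y))
        (Finset.sum_congr rfl fun xv _ => Finset.sum_congr rfl fun yv _ => by congr)
  linear_combination (1 / (n : ℝ)) * hcore


end CRGen
end
end
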